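/- arXiv:2111.01661 — 12 statements merged into one kernel-verified Lean document; each statement's English description precedes it below -/
import Mathlib

section
/- Let q = 2n+1 be an odd prime power, let d ∈ F_q^× be a non-square (d ∉ F_q^{×2}), and let r be an integer with 1 ≤ r ≤ q-2 such that r ≡ n (mod 2). Then S_q(r,d) = 0. -/
/-- Let `q = 2n+1` be an odd prime power, `χ` a generator of the group of complex-valued
multiplicative characters of `F_q`, `α` an enumeration of the nonzero squares of `F_q`.
If `d ∈ F_q^×` is a non-square and `1 ≤ r ≤ q-2` with `r ≡ n (mod 2)`, then
`S_q(r,d) = det [χ^r(α_i + d·α_j)] = 0`. -/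
theorem stmt_0 (F : Type) [Field F] [Fintype F] [DecidableEq F]
    (n : ℕ) (hq : Fintype.card F = 2 * n + 1)
    (χ : MulChar F ℂ) (hχ : orderOf χ = 2 * n)
    (α : Fin n → F) (hαinj : Function.Injective α)
    (hαrange : Set.range α = {x : F | x ≠ 0 ∧ IsSquare x})
    (d : F) (hd0 : d ≠ 0) (hd : ¬ IsSquare d)
    (r : ℕ) (hr1 : 1 ≤ r) (hr2 : r ≤ 2 * n - 1) (hrn : r % 2 = n % 2) :
    Matrix.det (Matrix.of fun i j : Fin n => (χ ^ r) (α i + d * α j)) = 0 := by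
  classical
  have hn1 : 1 ≤ n := by omega
  -- characteristic is not 2
  have hchar : ringChar F ≠ 2 := by
    intro h
    have := FiniteField.even_card_of_char_two h
    omega
  -- generator of the unit group
  obtain ⟨g, hg⟩ := IsCyclic.exists_generator (α := Fˣ)
  have hcardU : Fintype.card Fˣ = 2 * n := by
    rw [Fintype.card_units, hq]
    omega
  have hog : orderOf g = 2 * n := by
    rw [orderOf_eq_card_of_forall_mem_zpowers hg, Nat.card_eq_fintype_card, hcardU]
  have hpow : ∀ x : F, x ≠ 0 → ∃ s : ℕ, ((g : F)) ^ s = x := by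
    intro x hx
    obtain ⟨s, hs⟩ := (mem_powers_iff_mem_zpowers).mpr (hg (Units.mk0 x hx))
    refine ⟨s, ?_⟩
    have := congrArg (Units.val) hs
    simpa using this
  have hval : ∀ k : ℕ, ((g ^ k : Fˣ) : F) = ((g : F)) ^ k := fun k =>
    Units.val_pow_eq_pow_val _ _
  have hg2n : ((g : F)) ^ (2 * n) = 1 := by
    have h1 : g ^ (2 * n) = 1 := by rw [← hog]; exact pow_orderOf_eq_one g
    rw [← hval, h1, Units.val_one]

  -- (g : F) ^ n = -1
  have hgn : ((g : F)) ^ n = -1 := by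
    have h2 : ((g : F) ^ n) * ((g : F) ^ n) = 1 := by
      rw [← pow_add]
      rw [show n + n = 2 * n by ring, hg2n]
    rcases mul_self_eq_one_iff.mp h2 with h | h
    · exfalso
      have hu : g ^ n = 1 := Units.ext (by rw [Units.val_one, hval, h])
      have := orderOf_dvd_of_pow_eq_one hu
      rw [hog] at this
      have := Nat.le_of_dvd (by omega) this
      omega
    · exact h
  -- χ(-1) = -1
  have hχm1 : χ (-1) = -1 := by
    have hu2 : χ (-1) * χ (-1) = 1 := by
      rw [← map_mul]; norm_num
    have hune : χ (-1) ≠ 1 := by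
      intro h
      have hχn : χ ^ n = 1 := by
        apply MulChar.ext
        intro a
        obtain ⟨s, hs⟩ := hpow (a : F) a.ne_zero
        rw [MulChar.one_apply_coe, MulChar.pow_apply_coe, ← hs, ← map_pow, ← pow_mul,
          mul_comm s n, pow_mul, map_pow, show χ ((g:F)^n) = 1 by rw [hgn, h], one_pow]
      have hdvd := orderOf_dvd_of_pow_eq_one hχn
      rw [hχ] at hdvd
      have := Nat.le_of_dvd (by omega) hdvd
      omega
    exact (mul_self_eq_one_iff.mp hu2).resolve_left hune
  -- Euler's criterion: d ^ n = -1
  have hdn : d ^ n = -1 := by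
    have h2 : Fintype.card F / 2 = n := by omega
    rcases FiniteField.pow_dichotomy hchar hd0 with h | h
    · exact absurd ((FiniteField.isSquare_iff hchar hd0).mpr h) hd
    · rw [h2] at h; exact h
  -- key character value
  have hkey1 : ((χ ^ r) d) ^ n = (-1 : ℂ) ^ r := by
    rw [MulChar.pow_apply' χ (by omega : r ≠ 0) d, ← pow_mul, mul_comm r n, pow_mul,
      ← map_pow, hdn, hχm1]
  -- membership facts
  have hα0 : ∀ i, α i ≠ 0 ∧ IsSquare (α i) := by
    intro i
    have : α i ∈ Set.range α := ⟨i, rfl⟩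
    rw [hαrange] at this
    exact this
  have hmem : ∀ x : F, x ≠ 0 → IsSquare x → ∃ i, α i = x := by
    intro x h1 h2
    have : x ∈ Set.range α := by rw [hαrange]; exact ⟨h1, h2⟩
    exact this
  -- permutation induced by multiplication with a nonzero square
  have hperm : ∀ c : F, c ≠ 0 → IsSquare c →
      ∃ σ : Equiv.Perm (Fin n), ∀ i, α (σ i) = c * α i := by
    intro c hc hcs
    have H : ∀ i, ∃ k, α k = c * α i := fun i =>
      hmem _ (mul_ne_zero hc (hα0 i).1) (hcs.mul (hα0 i).2)
    choose f hf using H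
    have hfinj : Function.Injective f := by
      intro i j hij
      apply hαinj
      have h1 := hf i
      have h2 := hf j
      rw [hij, h2] at h1
      exact mul_left_cancel₀ hc h1.symm
    exact ⟨Equiv.ofBijective f (Finite.injective_iff_bijective.mp hfinj), fun i => hf i⟩
  -- π : multiplication by g²
  obtain ⟨π, hπ⟩ := hperm ((g : F) ^ 2) (pow_ne_zero _ (Units.ne_zero g)) ⟨(g : F), (sq _)⟩
  have hπpow : ∀ (t : ℕ) (i : Fin n), α ((π ^ t) i) = ((g : F)) ^ (2 * t) * α i := by
    intro t
    induction t with
    | zero => intro i; simp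
    | succ t ih =>
      intro i
      have hstep : (π ^ (t + 1)) i = (π ^ t) (π i) := by
        rw [pow_succ]; rfl
      rw [hstep, ih, hπ, ← mul_assoc, ← pow_add]
      ring_nf
  -- exponent of d
  obtain ⟨m0, hm0⟩ := hpow d hd0
  have hm0odd : m0 % 2 = 1 := by
    by_contra h
    obtain ⟨t, ht⟩ : ∃ t, m0 = 2 * t := ⟨m0 / 2, by omega⟩
    exact hd ⟨(g : F) ^ t, by rw [← hm0, ht, mul_comm 2 t, pow_mul, sq]⟩
  set m := m0 % (2 * n) with hm_def
  have hm_eq : ((g : F)) ^ m = d := by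
    rw [← hm0]
    have : g ^ m = g ^ m0 := by rw [hm_def, ← hog]; exact pow_mod_orderOf g m0
    rw [← hval, this, hval]
  have hmodd : m % 2 = 1 := by
    rw [hm_def, Nat.mod_mod_of_dvd m0 ⟨n, rfl⟩, hm0odd]
  have hmlt : m < 2 * n := Nat.mod_lt _ (by omega)
  set j := 2 * n - m with hj_def
  have hjodd : j % 2 = 1 := by omega
  set σ := π ^ j with hσ_def
  -- α (σ i) = d⁻¹ * d⁻¹ * α i
  have hσ : ∀ i, α (σ i) = d⁻¹ * d⁻¹ * α i := by
    intro i
    rw [hσ_def, hπpow j i]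
    congr 1
    have hdd : d * d ≠ 0 := mul_ne_zero hd0 hd0
    have hmain : ((g : F)) ^ (2 * j) * (d * d) = 1 := by
      rw [← hm_eq, ← pow_add, ← pow_add, show 2 * j + (m + m) = 2 * n * 2 by omega,
        pow_mul, hg2n, one_pow]
    rw [show d⁻¹ * d⁻¹ = (d * d)⁻¹ by rw [mul_inv]]
    exact eq_inv_of_mul_eq_one_left hmain
  -- every two indices lie on the same π-cycle
  have hsame : ∀ i y : Fin n, ∃ s : ℕ, (π ^ s) i = y := by
    intro i y
    obtain ⟨v, hv⟩ := (hα0 i).2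
    obtain ⟨u, hu⟩ := (hα0 y).2
    have hvne : v ≠ 0 := by intro h; exact (hα0 i).1 (by rw [hv, h, mul_zero])
    have hune : u ≠ 0 := by intro h; exact (hα0 y).1 (by rw [hu, h, mul_zero])
    obtain ⟨s, hs⟩ := hpow (u * v⁻¹) (mul_ne_zero hune (inv_ne_zero hvne))
    refine ⟨s, hαinj ?_⟩
    rw [hπpow s i, hv, hu, mul_comm 2 s, pow_mul, hs]
    field_simp
  -- sign of π
  have hsπ : Equiv.Perm.sign π = -(-1 : ℤˣ) ^ n := by
    rcases eq_or_lt_of_le hn1 with h1 | h2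
    · -- n = 1
      have : π = 1 := by
        apply Equiv.ext
        intro i
        have : Subsingleton (Fin n) := by rw [← h1]; infer_instance
        exact Subsingleton.elim _ _
      rw [this, map_one, ← h1]
      simp
    · -- n ≥ 2
      have hmoved : ∀ i, π i ≠ i := by
        intro i h
        have hπi := hπ i
        rw [h] at hπi
        have hg2 : ((g : F)) ^ 2 = 1 := by
          have h' : ((g : F)) ^ 2 * α i = 1 * α i := by rw [one_mul, ← hπi]
          exact mul_right_cancel₀ (hα0 i).1 h'
        have hu : g ^ 2 = 1 := Units.ext (by rw [Units.val_one, hval, hg2])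
        have := orderOf_dvd_of_pow_eq_one hu
        rw [hog] at this
        have := Nat.le_of_dvd (by omega) this
        omega
      have hcyc : π.IsCycle := by
        refine ⟨⟨0, by omega⟩, hmoved _, fun y _ => ?_⟩
        obtain ⟨s, hs⟩ := hsame ⟨0, by omega⟩ y
        exact ⟨(s : ℤ), by rw [zpow_natCast]; exact hs⟩
      have hsupp : π.support = Finset.univ := by
        ext i
        simp [Equiv.Perm.mem_support, hmoved i]
      have := hcyc.sign
      rw [hsupp] at this
      simpa using this
  -- sign of σ
  have hsσ : Equiv.Perm.sign σ = -(-1 : ℤˣ) ^ n := by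
    rw [hσ_def, map_pow, hsπ]
    have hoddj : Odd j := Nat.odd_iff.mpr hjodd
    rcases Nat.even_or_odd n with he | ho
    · rw [he.neg_one_pow]
      simpa using hoddj.neg_one_pow
    · rw [ho.neg_one_pow]
      simp
  -- transpose identity
  set M := Matrix.of fun i j : Fin n => (χ ^ r) (α i + d * α j) with hM
  have htrans : Matrix.transpose M = ((χ ^ r) d) • (M.submatrix id σ) := by
    ext i j
    simp only [Matrix.transpose_apply, Matrix.smul_apply, Matrix.submatrix_apply, id_eq, hM,
      Matrix.of_apply, smul_eq_mul]
    rw [hσ j, ← map_mul]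
    congr 1
    field_simp
    ring
  have hdet := congrArg Matrix.det htrans
  rw [Matrix.det_transpose (R := ℂ), Matrix.det_smul, Matrix.det_permute'] at hdet
  rw [hsσ, Fintype.card_fin, hkey1] at hdet
  have hcast : ((((-(-1 : ℤˣ) ^ n : ℤˣ)) : ℤ) : ℂ) = -(-1 : ℂ) ^ n := by
    push_cast
    simp
  rw [hcast] at hdet
  have heven : (-1 : ℂ) ^ r * (-1 : ℂ) ^ n = 1 := by
    rw [← pow_add]
    have : Even (r + n) := by
      rcases Nat.even_or_odd r with h | h
      · have hr0 : r % 2 = 0 := Nat.even_iff.mp h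
        exact h.add (Nat.even_iff.mpr (by omega))
      · have hr0 : r % 2 = 1 := Nat.odd_iff.mp h
        exact h.add_odd (Nat.odd_iff.mpr (by omega))
    exact this.neg_one_pow
  have hfinal : M.det = -M.det := by
    calc M.det = (-1 : ℂ) ^ r * (-(-1 : ℂ) ^ n * M.det) := hdet
      _ = -((-1 : ℂ) ^ r * (-1 : ℂ) ^ n) * M.det := by ring
      _ = -M.det := by rw [heven]; ring
  have : (2 : ℂ) * M.det = 0 := by linear_combination hfinal
  have h2 : (2 : ℂ) ≠ 0 := two_ne_zero
  exact (mul_eq_zero.mp this).resolve_left h2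
end

section
/- Let q = 2n+1 be an odd prime power with q ≡ 3 (mod 4), let d ∈ F_q^{×2} be a nonzero square, and let r be an integer with 1 ≤ r ≤ q-2. Then S_q(r,d) = S_q(r,1). -/
/-- Let `q = 2n+1` be an odd prime power with `q ≡ 3 (mod 4)`, `χ` a generator of the group of
complex-valued multiplicative characters of `F_q`, `α` an enumeration of the nonzero squares of
`F_q`. If `d` is a nonzero square and `1 ≤ r ≤ q-2`, then `S_q(r,d) = S_q(r,1)`. -/
theorem stmt_1 (F : Type) [Field F] [Fintype F] [DecidableEq F]
    (n : ℕ) (hq : Fintype.card F = 2 * n + 1) (hq4 : (2 * n + 1) % 4 = 3)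
    (χ : MulChar F ℂ) (hχ : orderOf χ = 2 * n)
    (α : Fin n → F) (hαinj : Function.Injective α)
    (hαrange : Set.range α = {x : F | x ≠ 0 ∧ IsSquare x})
    (d : F) (hd0 : d ≠ 0) (hd : IsSquare d)
    (r : ℕ) (hr1 : 1 ≤ r) (hr2 : r ≤ 2 * n - 1) :
    Matrix.det (Matrix.of fun i j : Fin n => (χ ^ r) (α i + d * α j)) =
      Matrix.det (Matrix.of fun i j : Fin n => (χ ^ r) (α i + α j)) := by
  -- n is odd
  have hnodd : Odd n := by
    rcases Nat.even_or_odd n with h | h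
    · exfalso; obtain ⟨m, hm⟩ := h; omega
    · exact h
  -- d^n = 1
  have hdn : d ^ n = 1 := by
    obtain ⟨c, hc⟩ := hd
    have hc0 : c ≠ 0 := by rintro rfl; simp at hc; exact hd0 hc
    have := FiniteField.pow_card_sub_one_eq_one c hc0
    rw [hq] at this
    have h2 : (2 * n + 1) - 1 = 2 * n := by omega
    rw [h2] at this
    calc d ^ n = c ^ (2 * n) := by rw [hc, ← sq, ← pow_mul]
    _ = 1 := this
  -- for each j, d * α j is in the range of α
  have hmem : ∀ j : Fin n, ∀ x ∈ Set.range α, x * α j ∈ Set.range α := by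
    intro j x hx
    have hj : α j ∈ Set.range α := ⟨j, rfl⟩
    rw [hαrange] at hx hj ⊢
    exact ⟨mul_ne_zero hx.1 hj.1, hx.2.mul hj.2⟩
  -- build σ with α (σ j) = d * α j
  have hdr : d ∈ Set.range α := by rw [hαrange]; exact ⟨hd0, hd⟩
  have hmem' : ∀ j : Fin n, d * α j ∈ Set.range α := fun j => hmem j d hdr
  choose σ0 hσ0 using fun j => hmem' j
  have hσinj : Function.Injective σ0 := by
    intro j k h
    apply hαinj
    have := hσ0 j
    rw [h, hσ0 k] at this
    exact mul_left_cancel₀ hd0 this.symm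
  let σ : Equiv.Perm (Fin n) := Equiv.ofBijective σ0
    ((Finite.injective_iff_bijective).mp hσinj)
  have hσ : ∀ j, α (σ j) = d * α j := hσ0
  -- iterate: α (σ^m j) = d^m * α j
  have hσpow : ∀ m : ℕ, ∀ j, α ((σ ^ m) j) = d ^ m * α j := by
    intro m
    induction m with
    | zero => intro j; simp
    | succ m ih =>
      intro j
      rw [pow_succ, Equiv.Perm.mul_apply, ih, hσ, pow_succ]
      ring
  have hσn : σ ^ n = 1 := Equiv.ext fun j => hαinj
    (by rw [hσpow n j, hdn, one_mul, Equiv.Perm.one_apply])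
  -- sign σ = 1
  have hsign : Equiv.Perm.sign σ = 1 := by
    have h1 : (Equiv.Perm.sign σ) ^ n = 1 := by
      rw [← map_pow, hσn, map_one]
    rcases Int.units_eq_one_or (Equiv.Perm.sign σ) with h | h
    · exact h
    · rw [h, hnodd.neg_one_pow] at h1
      exact absurd h1 (by decide)
  -- matrix identity
  have hM : (Matrix.of fun i j : Fin n => (χ ^ r) (α i + d * α j)) =
      (Matrix.of fun i j : Fin n => (χ ^ r) (α i + α j)).submatrix id σ := by
    ext i j
    simp [hσ j]
  rw [hM, Matrix.det_permute', hsign]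
  simp
end

section
/- Let q = 2n+1 be an odd prime power with q ≡ 1 (mod 4), let d ∈ F_q^{×2} be a nonzero square, and let r be an integer with 1 ≤ r ≤ q-2. Then S_q(r,d) = δ_d · S_q(r,1), where δ_d = 1 if d = c^4 for some c ∈ F_q^× and δ_d = -1 otherwise. -/
private lemma addLeft_add' {G : Type*} [AddGroup G] (a b : G) :
    Equiv.addLeft (a + b) = Equiv.addLeft a * Equiv.addLeft b := by
  ext x; simp [add_assoc]

private lemma addLeft_natCast (m t : ℕ) :
    Equiv.addLeft ((t : ZMod (m+1))) = (Equiv.addLeft (1 : ZMod (m+1)))^t := by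
  induction t with
  | zero => ext x; simp
  | succ t ih =>
    have h : ((t+1 : ℕ) : ZMod (m+1)) = (t : ZMod (m+1)) + 1 := by push_cast; ring
    rw [h, addLeft_add', ih, pow_succ]

private lemma sign_addLeft_one (m : ℕ) :
    Equiv.Perm.sign (Equiv.addLeft (1 : ZMod (m+1))) = (-1)^m := by
  have he : Equiv.addLeft (1 : ZMod (m+1)) = finRotate (m+1) := by
    ext i
    have h : (Equiv.addLeft (1 : ZMod (m+1))) i = (1 : ZMod (m+1)) + i := rfl
    rw [h]
    have h2 : ∀ j : Fin (m+1), (1 : Fin (m+1)) + j = (finRotate (m+1)) j := by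
      intro j; rw [finRotate_succ_apply]; exact add_comm _ _
    exact h2 i
  rw [he]
  have hfr := sign_finRotate (m+1)
  rw [Nat.add_sub_cancel] at hfr
  exact hfr


/-- Let `q = 2n+1` be an odd prime power with `q ≡ 1 (mod 4)`, `χ` a generator of the group of
complex-valued multiplicative characters of `F_q`, `α` an enumeration of the nonzero squares of
`F_q`. If `d` is a nonzero square and `1 ≤ r ≤ q-2`, then `S_q(r,d) = δ_d · S_q(r,1)`, where
`δ_d = 1` if `d` is a fourth power in `F_q^×` and `δ_d = -1` otherwise. -/
theorem stmt_2 (F : Type) [Field F] [Fintype F] [DecidableEq F]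
    (n : ℕ) (hq : Fintype.card F = 2 * n + 1) (hq4 : (2 * n + 1) % 4 = 1)
    (χ : MulChar F ℂ) (hχ : orderOf χ = 2 * n)
    (α : Fin n → F) (hαinj : Function.Injective α)
    (hαrange : Set.range α = {x : F | x ≠ 0 ∧ IsSquare x})
    (d : F) (hd0 : d ≠ 0) (hd : IsSquare d)
    (r : ℕ) (hr1 : 1 ≤ r) (hr2 : r ≤ 2 * n - 1) :
    Matrix.det (Matrix.of fun i j : Fin n => (χ ^ r) (α i + d * α j)) =
      (if ∃ c : F, c ≠ 0 ∧ c ^ 4 = d then (1 : ℂ) else -1) *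
        Matrix.det (Matrix.of fun i j : Fin n => (χ ^ r) (α i + α j)) := by
  have hn2 : 2 ≤ n := by
    have hcard : 1 < Fintype.card F := Fintype.one_lt_card
    omega
  have hneven : n % 2 = 0 := by omega
  obtain ⟨m, rfl⟩ : ∃ m, n = m + 1 := ⟨n - 1, by omega⟩
  haveI : NeZero (m+1) := ⟨Nat.succ_ne_zero m⟩
  have hmodd : Odd m := by rw [Nat.odd_iff]; omega
  obtain ⟨u, hu⟩ := IsCyclic.exists_generator (α := Fˣ)
  have hord : orderOf u = 2 * (m+1) := by
    rw [orderOf_eq_card_of_forall_mem_zpowers hu, Nat.card_eq_fintype_card, Fintype.card_units, hq]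
    omega
  set v : ZMod (m+1) → Fˣ := fun k => u ^ (2 * k.val) with hv
  have hvmem : ∀ k, ((v k : F) ≠ 0 ∧ IsSquare ((v k : F))) := by
    intro k
    refine ⟨Units.ne_zero _, ⟨((u : F) ^ k.val), ?_⟩⟩
    show ((u ^ (2 * k.val) : Fˣ) : F) = _
    push_cast
    rw [two_mul, pow_add]
  have hvinj : Function.Injective v := by
    intro a b hab
    have h1 : 2 * a.val ≡ 2 * b.val [MOD 2 * (m+1)] := by
      have h := (pow_eq_pow_iff_modEq (x := u)).mp hab
      rwa [hord] at h
    have ha := ZMod.val_lt a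
    have hb := ZMod.val_lt b
    have hval : a.val = b.val := by
      unfold Nat.ModEq at h1
      rw [Nat.mod_eq_of_lt (by omega), Nat.mod_eq_of_lt (by omega)] at h1
      omega
    have := congrArg (fun t : ℕ => (t : ZMod (m+1))) hval
    simpa [ZMod.natCast_rightInverse a, ZMod.natCast_rightInverse b] using this
  have hvalcast : ∀ k : ZMod (m+1), ((k.val : ℕ) : ZMod (m+1)) = k := fun k =>
    ZMod.natCast_rightInverse k
  have hvcast : ∀ s : ℕ, v ((s : ℕ) : ZMod (m+1)) = u ^ (2 * s) := by
    intro s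
    show u ^ (2 * (ZMod.val ((s : ℕ) : ZMod (m+1)))) = u ^ (2 * s)
    rw [pow_eq_pow_iff_modEq, hord]
    have h : (ZMod.val ((s : ℕ) : ZMod (m+1))) ≡ s [MOD (m+1)] := by
      rw [ZMod.val_natCast]
      exact Nat.mod_modEq s (m+1)
    exact Nat.ModEq.mul_left' 2 h
  have hvadd : ∀ k l : ZMod (m+1), v (k + l) = v k * v l := by
    intro k l
    have h1 : v (k + l) = v (((k.val + l.val : ℕ) : ZMod (m+1))) := by
      rw [Nat.cast_add, hvalcast, hvalcast]
    rw [h1, hvcast, mul_add, pow_add]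
  have hpow : ∀ y : Fˣ, ∃ s : ℕ, u ^ s = y := by
    intro y
    have h := hu y
    rw [← mem_powers_iff_mem_zpowers] at h
    exact h
  have hvsurj : ∀ x : F, x ≠ 0 → IsSquare x → ∃ k, (v k : F) = x := by
    intro x hx0 hxsq
    obtain ⟨y, rfl⟩ := hxsq
    have hy0 : y ≠ 0 := fun h => hx0 (by rw [h, mul_zero])
    obtain ⟨s, hs⟩ := hpow (Units.mk0 y hy0)
    refine ⟨((s : ℕ) : ZMod (m+1)), ?_⟩
    rw [hvcast]
    have h2 : u ^ (2 * s) = (Units.mk0 y hy0) * (Units.mk0 y hy0) := by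
      rw [two_mul, pow_add, hs]
    rw [h2]
    push_cast
    simp
  obtain ⟨k₀, hk₀⟩ := hvsurj d hd0 hd
  -- enumeration equivalences
  have hmemα : ∀ j, α j ∈ {x : F | x ≠ 0 ∧ IsSquare x} := fun j => hαrange ▸ ⟨j, rfl⟩
  set A : Fin (m+1) → {x : F // x ≠ 0 ∧ IsSquare x} := fun j => ⟨α j, hmemα j⟩ with hA
  set B : ZMod (m+1) → {x : F // x ≠ 0 ∧ IsSquare x} := fun k => ⟨(v k : F), hvmem k⟩ with hB
  have hAbij : Function.Bijective A := by
    constructor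
    · intro a b hab
      exact hαinj (congrArg Subtype.val hab)
    · rintro ⟨x, hx⟩
      have : x ∈ Set.range α := hαrange ▸ hx
      obtain ⟨j, hj⟩ := this
      exact ⟨j, Subtype.ext hj⟩
  have hBbij : Function.Bijective B := by
    constructor
    · intro a b hab
      exact hvinj (Units.ext (congrArg Subtype.val hab))
    · rintro ⟨x, hx0, hxsq⟩
      obtain ⟨k, hk⟩ := hvsurj x hx0 hxsq
      exact ⟨k, Subtype.ext hk⟩
  set eA : Fin (m+1) ≃ {x : F // x ≠ 0 ∧ IsSquare x} := Equiv.ofBijective A hAbij with heA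
  set eB : ZMod (m+1) ≃ {x : F // x ≠ 0 ∧ IsSquare x} := Equiv.ofBijective B hBbij with heB
  set ι : Fin (m+1) ≃ ZMod (m+1) := eA.trans eB.symm with hι
  have hαv : ∀ j, α j = (v (ι j) : F) := by
    intro j
    have h : B (ι j) = A j := eB.apply_symm_apply (A j)
    exact (congrArg Subtype.val h).symm
  set p : Equiv.Perm (ZMod (m+1)) := Equiv.addLeft k₀ with hp
  set σ : Equiv.Perm (Fin (m+1)) := ι.symm.permCongr p with hσdef
  have hσ : ∀ j, ι (σ j) = k₀ + ι j := by
    intro j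
    have h : σ j = ι.symm (p (ι j)) := by
      rw [hσdef]
      simp [Equiv.permCongr_apply]
    rw [h, Equiv.apply_symm_apply]
    rfl
  have hM : (Matrix.of fun i j : Fin (m+1) => (χ ^ r) (α i + d * α j))
      = (Matrix.of fun i j : Fin (m+1) => (χ ^ r) (α i + α j)).submatrix id σ := by
    ext i j
    simp only [Matrix.submatrix_apply, Matrix.of_apply, id]
    have h : α (σ j) = d * α j := by
      rw [hαv (σ j), hσ j, hvadd, Units.val_mul, hk₀, ← hαv j]
    rw [h]
  rw [hM, Matrix.det_permute']
  have hsign : Equiv.Perm.sign σ = (-1) ^ (k₀.val) := by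
    have h1 : Equiv.Perm.sign σ = Equiv.Perm.sign p := Equiv.Perm.sign_permCongr _ _
    have h2 : p = Equiv.addLeft (((k₀.val : ℕ) : ZMod (m+1))) := by rw [hvalcast]
    rw [h1, h2, addLeft_natCast, map_pow, sign_addLeft_one, hmodd.neg_one_pow]
  have hiff : (∃ c : F, c ≠ 0 ∧ c ^ 4 = d) ↔ Even (k₀.val) := by
    constructor
    · rintro ⟨c, hc0, hc4⟩
      obtain ⟨s, hs⟩ := hpow (Units.mk0 c hc0)
      have hun : u ^ (4 * s) = u ^ (2 * k₀.val) := by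
        apply Units.ext
        push_cast
        calc ((u : F)) ^ (4 * s) = (((u ^ s : Fˣ) : F)) ^ 4 := by
              push_cast
              rw [← pow_mul]
              ring
          _ = c ^ 4 := by rw [hs]; simp
          _ = d := hc4
          _ = ((v k₀ : Fˣ) : F) := hk₀.symm
          _ = ((u : F)) ^ (2 * k₀.val) := by rw [hv]; push_cast; ring
      have hmod : 4 * s ≡ 2 * k₀.val [MOD 2 * (m+1)] := by
        have := (pow_eq_pow_iff_modEq (x := u)).mp hun
        rwa [hord] at this
      obtain ⟨M, hMN⟩ : ∃ M, m + 1 = 2 * M := ⟨(m+1) / 2, by omega⟩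
      have hdvd := Nat.modEq_iff_dvd.mp hmod
      obtain ⟨K, hK⟩ := hdvd
      push_cast at hK
      have hm1 : ((m : ℤ) + 1) = 2 * (M : ℤ) := by exact_mod_cast hMN
      have h4 : (2 * ((m : ℤ) + 1)) * K = 4 * ((M : ℤ) * K) := by rw [hm1]; ring
      have hteq : ((k₀.val : ℤ)) = ((s : ℤ) + (M : ℤ) * K) + ((s : ℤ) + (M : ℤ) * K) := by
        linarith [hK, h4]
      have heven : Even ((k₀.val : ℕ) : ℤ) := ⟨(s : ℤ) + (M : ℤ) * K, hteq⟩
      exact (Int.even_coe_nat _).mp heven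
    · rintro ⟨s, hs⟩
      refine ⟨((u ^ s : Fˣ) : F), Units.ne_zero _, ?_⟩
      have h4 : ((u ^ s : Fˣ) : F) ^ 4 = ((u ^ (2 * k₀.val) : Fˣ) : F) := by
        push_cast
        rw [← pow_mul]
        congr 1
        omega
      rw [h4]
      exact hk₀
  by_cases hcase : Even (k₀.val)
  · rw [if_pos (hiff.mpr hcase), hsign, hcase.neg_one_pow]
    norm_num
  · rw [if_neg (fun h => hcase (hiff.mp h)), hsign,
      (Nat.odd_iff.mpr (by have := Nat.even_iff.not.mp hcase; omega)).neg_one_pow]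
    norm_num
end

section
/- Let q = 2n+1 be an odd prime power and let r be an integer with 1 ≤ r ≤ q-2. Then S_q(r,1) = (-1)^{r(n-1)} · ∏_{k=1}^{n} λ_k, where for each 1 ≤ k ≤ n, λ_k = Σ_{j=1}^{n} χ^r(1 + α_j) · χ^{k-r}(α_j). -/
open Fin.NatCast

lemma aux_addRight_pow {n : ℕ} [NeZero n] (s : ℕ) :
    (Equiv.addRight (1 : Fin n)) ^ s = Equiv.addRight ((s : ℕ) : Fin n) := by
  induction s with
  | zero => ext x; simp
  | succ m ih =>
    ext x
    rw [pow_succ]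
    simp only [Equiv.Perm.mul_apply, ih, Equiv.coe_addRight, Nat.cast_add, Nat.cast_one]
    rw [add_assoc, add_comm (1 : Fin n)]

lemma aux_sign_addRight_one {n : ℕ} [NeZero n] :
    Equiv.Perm.sign (Equiv.addRight (1 : Fin n)) = (-1) ^ (n - 1) := by
  obtain ⟨m, rfl⟩ := Nat.exists_eq_succ_of_ne_zero (NeZero.ne n)
  have h : (Equiv.addRight (1 : Fin (m + 1)) : Equiv.Perm (Fin (m + 1))) = finRotate (m + 1) := by
    ext x; simp
  rw [h, sign_finRotate]

lemma aux_neg_one_pow_mod {a b : ℕ} (h : a % 2 = b % 2) : (-1 : ℂ) ^ a = (-1 : ℂ) ^ b := by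
  conv_lhs => rw [← Nat.div_add_mod a 2]
  conv_rhs => rw [← Nat.div_add_mod b 2]
  rw [pow_add, pow_add, pow_mul, pow_mul, neg_one_sq, one_pow, one_pow, h]

/-- Let `q = 2n+1` be an odd prime power, `χ` a generator of the group of complex-valued
multiplicative characters of `F_q`, `α` an enumeration of the nonzero squares of `F_q`, and
`1 ≤ r ≤ q-2`. Then `S_q(r,1) = (-1)^{r(n-1)} ∏_{k=1}^n λ_k`, where
`λ_k = ∑_{j=1}^n χ^r(1+α_j) χ^{k-r}(α_j)`. -/
theorem stmt_3 (F : Type) [Field F] [Fintype F] [DecidableEq F]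
    (n : ℕ) (hq : Fintype.card F = 2 * n + 1)
    (χ : MulChar F ℂ) (hχ : orderOf χ = 2 * n)
    (α : Fin n → F) (hαinj : Function.Injective α)
    (hαrange : Set.range α = {x : F | x ≠ 0 ∧ IsSquare x})
    (r : ℕ) (hr1 : 1 ≤ r) (hr2 : r ≤ 2 * n - 1) :
    Matrix.det (Matrix.of fun i j : Fin n => (χ ^ r) (α i + α j)) =
      (-1 : ℂ) ^ (r * (n - 1)) *
        ∏ k ∈ Finset.Icc 1 n,
          ∑ j : Fin n, (χ ^ r) (1 + α j) * (χ ^ ((k : ℤ) - (r : ℤ))) (α j) := by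
  classical
  have hcard : 1 < Fintype.card F := Fintype.one_lt_card
  have hn : 0 < n := by omega
  haveI : NeZero n := ⟨hn.ne'⟩
  -- basic facts about α
  have hα0 : ∀ j, α j ≠ 0 := fun j => by
    have : α j ∈ Set.range α := ⟨j, rfl⟩
    rw [hαrange] at this; exact this.1
  have hαsq : ∀ j, IsSquare (α j) := fun j => by
    have : α j ∈ Set.range α := ⟨j, rfl⟩
    rw [hαrange] at this; exact this.2
  have hmem : ∀ x : F, x ≠ 0 → IsSquare x → ∃ j, α j = x := by
    intro x h1 h2
    have : x ∈ Set.range α := by rw [hαrange]; exact ⟨h1, h2⟩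
    exact this
  -- evaluation of powers of characters
  have hpow : ∀ (ψ : MulChar F ℂ) (s : ℕ) (x : F), x ≠ 0 → (ψ ^ s) x = (ψ x) ^ s := by
    intro ψ s x hx
    cases s with
    | zero => rw [pow_zero, pow_zero, MulChar.one_apply (isUnit_iff_ne_zero.mpr hx)]
    | succ m => exact MulChar.pow_apply' ψ (Nat.succ_ne_zero m) x
  have hzpow : ∀ (ψ : MulChar F ℂ) (m : ℤ) (x : F), x ≠ 0 → (ψ ^ m) x = (ψ x) ^ m := by
    intro ψ m x hx
    cases m with
    | ofNat s => rw [Int.ofNat_eq_coe, zpow_natCast, zpow_natCast, hpow ψ s x hx]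
    | negSucc s =>
      rw [zpow_negSucc, zpow_negSucc, MulChar.inv_apply_eq_inv', hpow ψ (s + 1) x hx]
  have hord : χ ^ (2 * n) = 1 := by rw [← hχ]; exact pow_orderOf_eq_one χ
  -- χ ^ n is trivial on nonzero squares
  have hχn : ∀ x : F, x ≠ 0 → IsSquare x → (χ ^ (n : ℤ)) x = 1 := by
    intro x hx hsq
    obtain ⟨y, rfl⟩ := hsq
    have hy : y ≠ 0 := fun h => hx (by rw [h, mul_zero])
    rw [map_mul, hzpow χ n y hy, zpow_natCast, ← pow_add, ← hpow χ (n + n) y hy,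
      show n + n = 2 * n by ring, hord, MulChar.one_apply (isUnit_iff_ne_zero.mpr hy)]
  -- congruent exponents agree on squares
  have hcongr : ∀ (u v : ℤ), (n : ℤ) ∣ u - v → ∀ x : F, x ≠ 0 → IsSquare x →
      (χ ^ u) x = (χ ^ v) x := by
    intro u v ⟨t, ht⟩ x hx hsq
    have hu : u = v + (n : ℤ) * t := by linarith
    rw [hu, zpow_add, zpow_mul, MulChar.mul_apply, hzpow _ t x hx, hχn x hx hsq, one_zpow, mul_one]
  -- multiplication by a nonzero square permutes the α's
  have hperm : ∀ c : F, c ≠ 0 → IsSquare c → ∃ π : Equiv.Perm (Fin n),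
      ∀ j, α (π j) = c * α j := by
    intro c hc0 hcs
    have hex : ∀ j, ∃ j', α j' = c * α j := fun j =>
      hmem _ (mul_ne_zero hc0 (hα0 j)) (hcs.mul (hαsq j))
    choose g hg using hex
    have hginj : Function.Injective g := by
      intro a b hab
      apply hαinj
      have := hg a; rw [hab, hg b] at this
      exact mul_left_cancel₀ hc0 this.symm
    exact ⟨Equiv.ofBijective g (Finite.injective_iff_bijective.mp hginj), fun j => hg j⟩
  -- vanishing of nontrivial character sums over squares
  have hsum0 : ∀ m : ℤ, ¬ (n : ℤ) ∣ m → ∑ j, (χ ^ m) (α j) = 0 := by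
    intro m hm
    have hex : ∃ j, (χ ^ m) (α j) ≠ 1 := by
      by_contra h
      push_neg at h
      have h2 : χ ^ (2 * m) = 1 := by
        apply MulChar.ext
        intro a
        have ha : (a : F) ≠ 0 := a.ne_zero
        obtain ⟨j, hj⟩ := hmem ((a : F) * a) (mul_ne_zero ha ha) ⟨a, rfl⟩
        rw [MulChar.one_apply_coe, show (2 : ℤ) * m = m + m from two_mul m, zpow_add,
          MulChar.mul_apply, ← map_mul, ← hj]
        exact h j
      have hdvd : (orderOf χ : ℤ) ∣ 2 * m := orderOf_dvd_iff_zpow_eq_one.mpr h2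
      rw [hχ] at hdvd
      apply hm
      obtain ⟨t, ht⟩ := hdvd
      exact ⟨t, by push_cast at ht ⊢; linarith⟩
    obtain ⟨j0, hj0⟩ := hex
    obtain ⟨π, hπ⟩ := hperm (α j0) (hα0 j0) (hαsq j0)
    have hstep : ∑ j, (χ ^ m) (α j) = (χ ^ m) (α j0) * ∑ j, (χ ^ m) (α j) := by
      rw [Finset.mul_sum, ← Equiv.sum_comp π (fun j => (χ ^ m) (α j))]
      refine Finset.sum_congr rfl fun j _ => ?_
      rw [hπ j, map_mul]
    have h3 : ((χ ^ m) (α j0) - 1) * ∑ j, (χ ^ m) (α j) = 0 := by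
      rw [sub_mul, one_mul, ← hstep, sub_self]
    rcases mul_eq_zero.mp h3 with h4 | h4
    · exact absurd (sub_eq_zero.mp h4) hj0
    · exact h4
  -- the matrices
  set M : Matrix (Fin n) (Fin n) ℂ := Matrix.of fun i j : Fin n => (χ ^ r) (α i + α j) with hM
  set lam : Fin n → ℂ := fun k =>
    ∑ j, (χ ^ r) (1 + α j) * (χ ^ (((k : ℕ) : ℤ) + 1 - r)) (α j) with hlam
  set V : Matrix (Fin n) (Fin n) ℂ :=
    Matrix.of fun j k : Fin n => (χ ^ ((k : ℕ) + 1)) (α j) with hV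
  set W : Matrix (Fin n) (Fin n) ℂ :=
    Matrix.of fun j k : Fin n => (χ ^ (((k : ℕ) : ℤ) + 1 - r)) (α j) with hW
  set U : Matrix (Fin n) (Fin n) ℂ :=
    Matrix.of fun k j : Fin n => (χ ^ (-(((k : ℕ) : ℤ) + 1))) (α j) with hU
  -- step A : M * W = V * diagonal lam
  have hA : M * W = V * Matrix.diagonal lam := by
    ext i k
    rw [Matrix.mul_apply, Matrix.mul_diagonal]
    obtain ⟨π, hπ⟩ := hperm (α i) (hα0 i) (hαsq i)
    rw [← Equiv.sum_comp π (fun j => M i j * W j k)]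
    have hterm : ∀ j, M i (π j) * W (π j) k =
        ((χ ^ ((k : ℕ) + 1)) (α i)) * ((χ ^ r) (1 + α j) * (χ ^ (((k : ℕ) : ℤ) + 1 - r)) (α j)) := by
      intro j
      have e1 : M i (π j) = (χ ^ r) (α i) * (χ ^ r) (1 + α j) := by
        simp only [hM, Matrix.of_apply, hπ j]
        rw [show α i + α i * α j = α i * (1 + α j) by ring, map_mul]
      have e2 : W (π j) k =
          (χ ^ (((k : ℕ) : ℤ) + 1 - r)) (α i) * (χ ^ (((k : ℕ) : ℤ) + 1 - r)) (α j) := by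
        simp only [hW, Matrix.of_apply, hπ j, map_mul]
      rw [e1, e2]
      have e3 : (χ ^ r) (α i) * (χ ^ (((k : ℕ) : ℤ) + 1 - r)) (α i) =
          (χ ^ ((k : ℕ) + 1)) (α i) := by
        rw [← zpow_natCast χ r, ← MulChar.mul_apply, ← zpow_add,
          show (r : ℤ) + (((k : ℕ) : ℤ) + 1 - r) = (((k : ℕ) + 1 : ℕ) : ℤ) by push_cast; ring,
          zpow_natCast]
      rw [← e3]; ring
    rw [Finset.sum_congr rfl fun j _ => hterm j, ← Finset.mul_sum]
    rfl
  -- step B : W is a column permutation of V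
  set cR : Fin n := ((r : ℕ) : Fin n) with hcR
  set σ : Equiv.Perm (Fin n) := Equiv.subRight cR with hσ
  have hBdvd : ∀ k : Fin n, (n : ℤ) ∣ ((((k - cR : Fin n) : ℕ) + 1 : ℕ) : ℤ) -
      ((((k : ℕ) : ℤ)) + 1 - r) := by
    intro k
    have e1 : ((k - cR).val + cR.val) % n = k.val := by
      rw [← Fin.val_add, sub_add_cancel]
    have e2 : cR.val = r % n := by rw [hcR, Fin.val_natCast]
    set a := (k - cR).val with ha
    have e3 : a + r % n = n * ((a + r % n) / n) + k.val := by
      conv_lhs => rw [← Nat.div_add_mod (a + r % n) n]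
      rw [← e2, e1]
    have e4 : r = n * (r / n) + r % n := (Nat.div_add_mod r n).symm
    refine ⟨(((a + r % n) / n : ℕ) : ℤ) + ((r / n : ℕ) : ℤ), ?_⟩
    have e3' : (a : ℤ) + ((r % n : ℕ) : ℤ) =
        (n : ℤ) * (((a + r % n) / n : ℕ) : ℤ) + (k.val : ℤ) := by exact_mod_cast e3
    have e4' : (r : ℤ) = (n : ℤ) * ((r / n : ℕ) : ℤ) + ((r % n : ℕ) : ℤ) := by exact_mod_cast e4
    push_cast
    ring_nf
    ring_nf at e3' e4'
    linarith
  have hB : W = V.submatrix id σ := by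
    ext j k
    simp only [hW, hV, Matrix.submatrix_apply, Matrix.of_apply, id_eq]
    have : σ k = k - cR := rfl
    rw [this, ← zpow_natCast χ (((k - cR : Fin n) : ℕ) + 1)]
    exact (hcongr _ _ (hBdvd k) (α j) (hα0 j) (hαsq j)).symm
  -- V is invertible
  have hUV : U * V = (n : ℂ) • (1 : Matrix (Fin n) (Fin n) ℂ) := by
    ext k l
    rw [Matrix.mul_apply]
    have hterm : ∀ j, U k j * V j l = (χ ^ (((l : ℕ) : ℤ) - ((k : ℕ) : ℤ))) (α j) := by
      intro j
      simp only [hU, hV, Matrix.of_apply]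
      rw [← zpow_natCast χ ((l : ℕ) + 1), ← MulChar.mul_apply, ← zpow_add]
      congr 1
      push_cast
      ring
    rw [Finset.sum_congr rfl fun j _ => hterm j]
    by_cases hkl : k = l
    · subst hkl
      rw [sub_self]
      simp only [zpow_zero]
      rw [Finset.sum_congr rfl fun j _ => MulChar.one_apply (isUnit_iff_ne_zero.mpr (hα0 j))]
      simp [Matrix.smul_apply, Matrix.one_apply_eq]
    · have hnd : ¬ (n : ℤ) ∣ ((l : ℕ) : ℤ) - ((k : ℕ) : ℤ) := by
        intro hd
        have h0 : (((l : ℕ) : ℤ) - ((k : ℕ) : ℤ)) = 0 := by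
          refine Int.eq_zero_of_dvd_of_natAbs_lt_natAbs hd ?_
          have hk := k.isLt; have hl := l.isLt
          rw [Int.natAbs_natCast]
          omega
        exact hkl (Fin.ext (by omega))
      rw [hsum0 _ hnd]
      simp [Matrix.smul_apply, Matrix.one_apply_ne hkl]
  have hVdet : V.det ≠ 0 := by
    intro h0
    have := congrArg Matrix.det hUV
    rw [Matrix.det_mul, h0, mul_zero, Matrix.det_smul, Matrix.det_one, mul_one] at this
    have hne : ((n : ℂ)) ^ Fintype.card (Fin n) ≠ 0 := by
      apply pow_ne_zero
      exact_mod_cast hn.ne'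
    exact hne this.symm
  -- determinant computation
  have hdetW : W.det = ((Equiv.Perm.sign σ : ℤ) : ℂ) * V.det := by
    rw [hB, Matrix.det_permute']
  have hkey : M.det * W.det = V.det * ∏ k, lam k := by
    rw [← Matrix.det_mul, hA, Matrix.det_mul, Matrix.det_diagonal]
  -- the sign
  have hsign : ((Equiv.Perm.sign σ : ℤ) : ℂ) = (-1 : ℂ) ^ ((n - 1) * (r % n)) := by
    have h1 : σ = (Equiv.addRight cR)⁻¹ := by
      ext x
      simp [hσ, Equiv.Perm.inv_def, sub_eq_add_neg]
    rw [h1, map_inv]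
    rw [← Fin.cast_val_eq_self cR, ← aux_addRight_pow, map_pow, aux_sign_addRight_one]
    have e2 : cR.val = r % n := by rw [hcR, Fin.val_natCast]
    rw [e2]
    rw [← pow_mul]
    simp [Units.val_pow_eq_pow_val]
  have hpar : (-1 : ℂ) ^ ((n - 1) * (r % n)) = (-1 : ℂ) ^ (r * (n - 1)) := by
    apply aux_neg_one_pow_mod
    rcases Nat.even_or_odd n with he | ho
    · have h2 : r % n % 2 = r % 2 := Nat.mod_mod_of_dvd r he.two_dvd
      rw [Nat.mul_mod, Nat.mul_mod r, h2, Nat.mul_comm ((n - 1) % 2)]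
    · have h2 : (n - 1) % 2 = 0 := by
        obtain ⟨t, ht⟩ := ho
        omega
      rw [Nat.mul_mod, Nat.mul_mod r, h2]
      simp
  -- put everything together
  have hfinal : M.det = (-1 : ℂ) ^ (r * (n - 1)) * ∏ k, lam k := by
    rw [hdetW, hsign, hpar] at hkey
    set ε : ℂ := (-1 : ℂ) ^ (r * (n - 1)) with hε
    have hee : ε * ε = 1 := by
      rw [hε, ← pow_add, ← two_mul, pow_mul, neg_one_sq, one_pow]
    have hc : (M.det * ε) * V.det = ((∏ k, lam k)) * V.det := by
      calc (M.det * ε) * V.det = M.det * (ε * V.det) := by ring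
        _ = V.det * ∏ k, lam k := hkey
        _ = ((∏ k, lam k)) * V.det := by ring
    have hc2 : M.det * ε = ∏ k, lam k := mul_right_cancel₀ hVdet hc
    calc M.det = M.det * (ε * ε) := by rw [hee, mul_one]
      _ = (M.det * ε) * ε := by ring
      _ = (∏ k, lam k) * ε := by rw [hc2]
      _ = ε * ∏ k, lam k := by ring
  -- reindex the product
  have hstep1 : ∏ k : Fin n, lam k = ∏ i ∈ Finset.range n,
      ∑ j : Fin n, (χ ^ r) (1 + α j) * (χ ^ ((i : ℤ) + 1 - (r : ℤ))) (α j) := by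
    exact Fin.prod_univ_eq_prod_range
      (fun i => ∑ j : Fin n, (χ ^ r) (1 + α j) * (χ ^ ((i : ℤ) + 1 - (r : ℤ))) (α j)) n
  have hstep2 : (∏ i ∈ Finset.range n,
        ∑ j : Fin n, (χ ^ r) (1 + α j) * (χ ^ ((i : ℤ) + 1 - (r : ℤ))) (α j))
      = ∏ k ∈ Finset.Icc 1 n,
        ∑ j : Fin n, (χ ^ r) (1 + α j) * (χ ^ ((k : ℤ) - (r : ℤ))) (α j) := by
    refine Finset.prod_bij' (fun a _ => a + 1) (fun a _ => a - 1) ?_ ?_ ?_ ?_ ?_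
    · intro a ha
      simp only [Finset.mem_range] at ha
      simp only [Finset.mem_Icc]
      omega
    · intro a ha
      simp only [Finset.mem_Icc] at ha
      simp only [Finset.mem_range]
      omega
    · intro a ha
      omega
    · intro a ha
      simp only [Finset.mem_Icc] at ha
      omega
    · intro a ha
      refine Finset.sum_congr rfl fun j _ => ?_
      congr 2
  have hprod : (∏ k ∈ Finset.Icc 1 n,
      ∑ j : Fin n, (χ ^ r) (1 + α j) * (χ ^ ((k : ℤ) - (r : ℤ))) (α j)) = ∏ k, lam k :=
    hstep2.symm.trans hstep1.symm
  rw [hprod]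
  exact hfinal
end

section
/- Let q = 2n+1 be an odd prime power and let r be an integer with 1 ≤ r ≤ q-2. Let A_q(r) be the n×n complex matrix [χ^r(α_i + α_j) · χ^{-r}(α_j)]_{1≤i,j≤n}. Then for each 1 ≤ k ≤ n, the vector v_k = (χ^k(α_1), χ^k(α_2), …, χ^k(α_n))^T satisfies A_q(r) · v_k = λ_k · v_k, where λ_k = Σ_{j=1}^{n} χ^r(1 + α_j) · χ^{k-r}(α_j). -/
/-- Let `q = 2n+1` be an odd prime power, `χ` a generator of the group of complex-valued
multiplicative characters of `F_q`, `α` an enumeration of the nonzero squares of `F_q`, and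
`1 ≤ r ≤ q-2`. For `A_q(r) = [χ^r(α_i+α_j) χ^{-r}(α_j)]` and each `1 ≤ k ≤ n`, the vector
`v_k = (χ^k(α_1), …, χ^k(α_n))ᵀ` satisfies `A_q(r) v_k = λ_k v_k`, where
`λ_k = ∑_{j=1}^n χ^r(1+α_j) χ^{k-r}(α_j)`. -/
theorem stmt_4 (F : Type) [Field F] [Fintype F] [DecidableEq F]
    (n : ℕ) (hq : Fintype.card F = 2 * n + 1)
    (χ : MulChar F ℂ) (hχ : orderOf χ = 2 * n)
    (α : Fin n → F) (hαinj : Function.Injective α)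
    (hαrange : Set.range α = {x : F | x ≠ 0 ∧ IsSquare x})
    (r : ℕ) (hr1 : 1 ≤ r) (hr2 : r ≤ 2 * n - 1) :
    ∀ k ∈ Finset.Icc 1 n,
      (Matrix.of fun i j : Fin n =>
          (χ ^ r) (α i + α j) * (χ ^ (-(r : ℤ))) (α j)).mulVec
          (fun i => (χ ^ k) (α i)) =
        fun i =>
          (∑ j : Fin n, (χ ^ r) (1 + α j) * (χ ^ ((k : ℤ) - (r : ℤ))) (α j)) *
            (χ ^ k) (α i) := by
  intro k hk
  funext i
  have hα0 : ∀ j, α j ≠ 0 := fun j => (hαrange ▸ Set.mem_range_self j : _).1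
  have hαsq : ∀ j, IsSquare (α j) := fun j => (hαrange ▸ Set.mem_range_self j : _).2
  have hex : ∀ j : Fin n, ∃ j', α j' = α i * α j := by
    intro j
    have : α i * α j ∈ Set.range α := by
      rw [hαrange]
      exact ⟨mul_ne_zero (hα0 i) (hα0 j), (hαsq i).mul (hαsq j)⟩
    obtain ⟨j', hj'⟩ := this
    exact ⟨j', hj'⟩
  set g : Fin n → Fin n := fun j => (hex j).choose with hgdef
  have hg : ∀ j, α (g j) = α i * α j := fun j => (hex j).choose_spec
  have hginj : Function.Injective g := by
    intro a b hab
    apply hαinj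
    have := congrArg α hab
    rw [hg, hg] at this
    exact mul_left_cancel₀ (hα0 i) this
  have hgbij : Function.Bijective g := (Finite.injective_iff_bijective).mp hginj
  have h2 : ∀ (a b : ℤ) (x : F), (χ ^ a) x * (χ ^ b) x = (χ ^ (a + b)) x := by
    intro a b x
    rw [zpow_add]
    rfl
  simp only [Matrix.mulVec, Matrix.of_apply, dotProduct, Finset.sum_mul]
  refine (Fintype.sum_bijective g hgbij _ _ fun j => ?_).symm
  symm
  rw [hg j, ← mul_one_add]
  rw [map_mul, map_mul, map_mul]
  have hnpow : ∀ (m : ℕ) (x : F), (χ ^ m) x = (χ ^ (m : ℤ)) x := by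
    intro m x; rw [zpow_natCast]
  rw [hnpow r (α i), hnpow k (α i), hnpow k (α j)]
  have key1 : (χ ^ (r : ℤ)) (α i) * ((χ ^ (-(r : ℤ))) (α i) * (χ ^ (k : ℤ)) (α i))
      = (χ ^ (k : ℤ)) (α i) := by
    rw [h2, h2]
    norm_num
  have key2 : (χ ^ (-(r : ℤ))) (α j) * (χ ^ (k : ℤ)) (α j)
      = (χ ^ ((k : ℤ) - (r : ℤ))) (α j) := by
    rw [h2, neg_add_eq_sub]
  calc (χ ^ (r : ℤ)) (α i) * (χ ^ r) (1 + α j) *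
        ((χ ^ (-(r : ℤ))) (α i) * (χ ^ (-(r : ℤ))) (α j)) *
        ((χ ^ (k : ℤ)) (α i) * (χ ^ (k : ℤ)) (α j))
      = (χ ^ r) (1 + α j) * ((χ ^ (-(r : ℤ))) (α j) * (χ ^ (k : ℤ)) (α j)) *
        ((χ ^ (r : ℤ)) (α i) * ((χ ^ (-(r : ℤ))) (α i) * (χ ^ (k : ℤ)) (α i))) := by ring
    _ = (χ ^ r) (1 + α j) * (χ ^ ((k : ℤ) - (r : ℤ))) (α j) * (χ ^ k) (α i) := by
        rw [key1, key2, hnpow k (α i)]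
end

section
/- Let q = 2n+1 be an odd prime power with char(F_q) > 3 and q ≡ 1 (mod 4), and let d ∈ F_q^×. Then there exists x ∈ F_q such that D(d,q) = d^{(q-1)/4} · x^2. -/
open Finset

lemma auxBinom (n m : ℕ) (hn : n = 2*m) (hm : 1 ≤ m) :
    (∏ k ∈ Finset.range (m+1), (n+1).choose k)^2
      = (n+1)^2 * ∏ k ∈ Finset.Ico 2 n, (n+1).choose k := by
  have h2n : 2 ≤ n := by omega
  have h1 : ∏ k ∈ range (n+2), (n+1).choose k
      = (∏ k ∈ range (m+1), (n+1).choose k)^2 := by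
    rw [range_eq_Ico, ← Finset.prod_Ico_consecutive _ (Nat.zero_le (m+1)) (by omega : m+1 ≤ n+2)]
    have h2 : ∏ k ∈ Ico (m+1) (n+2), (n+1).choose k
        = ∏ k ∈ Ico 0 (m+1), (n+1).choose k := by
      have h3 : ∀ k ∈ Ico (m+1) (n+2), (n+1).choose k = (n+1).choose (n+1-k) := by
        intro k hk
        rw [Finset.mem_Ico] at hk
        rw [Nat.choose_symm (by omega)]
      rw [Finset.prod_congr rfl h3]
      have h4 := Finset.prod_Ico_reflect (fun k => (n+1).choose k) (m+1)
        (show n+2 ≤ (n+1)+1 by omega)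
      rw [h4, show n+1+1-(n+2) = 0 from by omega, show n+1+1-(m+1) = m+1 from by omega]
    rw [h2, sq, range_eq_Ico]
  have h4 : ∏ k ∈ range (n+2), (n+1).choose k
      = (n+1)^2 * ∏ k ∈ Ico 2 n, (n+1).choose k := by
    rw [Finset.prod_range_succ, Finset.prod_range_succ, Nat.choose_self,
      Nat.choose_succ_self_right, range_eq_Ico,
      Finset.prod_eq_prod_Ico_succ_bot (by omega : 0 < n),
      Finset.prod_eq_prod_Ico_succ_bot (by omega : 1 < n),
      Nat.choose_zero_right, Nat.choose_one_right]
    ring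
  rw [← h1, h4]

lemma auxSum (n m : ℕ) (hn : n = 2*m) (hm : 1 ≤ m) :
    1 + ∑ k ∈ Finset.Ico 2 n, (n+1-k) = m + 2*(m*(m-1)) := by
  have h2n : 2 ≤ n := by omega
  have h1 : ∑ k ∈ Ico 2 n, (n+1-k) = ∑ k ∈ Ico 2 n, k := by
    have h3 : ∀ k ∈ Ico 2 n, (n+1-k) = (fun j => j) ((n+1) - k) := by
      intro k hk; rfl
    rw [Finset.sum_congr rfl h3]
    have h4 := Finset.sum_Ico_reflect (fun j => j) 2 (show n ≤ (n+1)+1 by omega)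
    rw [h4, show n+1+1-n = 2 from by omega, show n+1+1-2 = n from by omega]
  have h2 : (0 : ℕ) + (1 + ∑ k ∈ Ico 2 n, k) = ∑ k ∈ range n, k := by
    rw [range_eq_Ico, Finset.sum_eq_sum_Ico_succ_bot (by omega : 0 < n),
      Finset.sum_eq_sum_Ico_succ_bot (by omega : 1 < n)]
  obtain ⟨m', rfl⟩ : ∃ m', m = m' + 1 := ⟨m - 1, by omega⟩
  have h6 : (∑ k ∈ range n, k) * 2 = 2*((m'+1)*(2*m'+1)) := by
    rw [Finset.sum_range_id_mul_two n]
    subst hn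
    rw [show 2*(m'+1)-1 = 2*m'+1 from by omega]; ring
  rw [h1, show (m'+1) - 1 = m' from by omega]
  set P := (m'+1)*(2*m'+1) with hP
  have h7 : P = (m'+1) + 2*((m'+1)*m') := by rw [hP]; ring
  rw [h7] at h6
  set A := (m'+1) + 2*((m'+1)*m') with hA
  omega

lemma auxKey (F : Type) [Field F] (n : ℕ) (hn : 2 ≤ n) (d x y : F)
    (hx : x ^ n = 1) (hy : y ^ n = 1) :
    (x + d*y)^(n+1)
      = ∑ k ∈ Finset.range n, x ^ k *
          (if k = 0 then d^(n+1) + ((n:F)+1)*d else if k = 1 then ((n:F)+1)*d^n + 1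
            else ((n+1).choose k : F) * d^(n+1-k)) * y ^ ((n+1-k) % n) := by
  have e1 : (n+1) % n = 1 := by
    rw [Nat.add_mod_left]; exact Nat.mod_eq_of_lt (by omega)
  have e2 : n % n = 0 := Nat.mod_self n
  rw [add_pow]
  rw [show n+1+1 = n+2 from rfl, Finset.sum_range_succ, Finset.sum_range_succ]
  rw [Finset.range_eq_Ico, Finset.sum_eq_sum_Ico_succ_bot (by omega : 0 < n),
    Finset.sum_eq_sum_Ico_succ_bot (by omega : 1 < n),
    Finset.sum_eq_sum_Ico_succ_bot (by omega : 0 < n),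
    Finset.sum_eq_sum_Ico_succ_bot (by omega : 1 < n),
    show (1:ℕ)+1 = 2 from by norm_num]
  have hmid : ∀ k ∈ Ico 2 n, x^k * ((d*y)^(n+1-k)) * (((n+1).choose k : ℕ) : F)
      = x ^ k * (if k = 0 then d^(n+1) + ((n:F)+1)*d else if k = 1 then ((n:F)+1)*d^n + 1
          else ((n+1).choose k : F) * d^(n+1-k)) * y ^ ((n+1-k) % n) := by
    intro k hk
    rw [Finset.mem_Ico] at hk
    rw [if_neg (by omega), if_neg (by omega), Nat.mod_eq_of_lt (by omega), mul_pow]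
    ring
  rw [Finset.sum_congr rfl hmid]
  simp only [if_pos, if_neg one_ne_zero, e1, e2, pow_zero, pow_one, Nat.choose_self,
    Nat.choose_succ_self_right, Nat.choose_zero_right, Nat.choose_one_right, Nat.sub_zero,
    Nat.sub_self, Nat.add_sub_cancel, Nat.add_sub_cancel_left, mul_pow, if_true]
  rw [pow_succ x, pow_succ y, hx, hy]
  push_cast
  ring

/-- Let `q = 2n+1` be an odd prime power with `char F_q > 3` and `q ≡ 1 (mod 4)`, `α` an
enumeration of the nonzero squares of `F_q`, and `d ∈ F_q^×`. Then there exists `x ∈ F_q` with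
`D(d,q) = det [(α_i + d·α_j)^{(q+1)/2}] = d^{(q-1)/4} x²`. -/
theorem stmt_6 (F : Type) [Field F] [Fintype F] [DecidableEq F]
    (q n : ℕ) (hqn : q = 2 * n + 1) (hq : Fintype.card F = q)
    (hchar : 3 < ringChar F) (hq4 : q % 4 = 1)
    (α : Fin n → F) (hαinj : Function.Injective α)
    (hαrange : Set.range α = {x : F | x ≠ 0 ∧ IsSquare x})
    (d : F) (hd : d ≠ 0) :
    ∃ x : F,
      Matrix.det (Matrix.of fun i j : Fin n => (α i + d * α j) ^ ((q + 1) / 2)) =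
        d ^ ((q - 1) / 4) * x ^ 2 := by
  classical
  have hcard2 : 2 ≤ q := hq ▸ Fintype.one_lt_card
  have hn2 : 2 ≤ n := by omega
  obtain ⟨m, hnm⟩ : ∃ m, n = 2*m := ⟨n/2, by omega⟩
  have hm1 : 1 ≤ m := by omega
  haveI : NeZero n := ⟨by omega⟩
  rw [show (q+1)/2 = n+1 from by omega, show (q-1)/4 = m from by omega]
  -- characteristic facts
  have hqF : ((q:ℕ) : F) = 0 := by rw [← hq]; exact FiniteField.cast_card_eq_zero F
  have hN1 : (2:F) * ((n:F)+1) = 1 := by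
    have h0 : ((2*n+1 : ℕ) : F) = 0 := by rw [← hqn]; exact hqF
    push_cast at h0
    linear_combination h0
  have hNne : ((n:F)+1) ≠ 0 := by
    intro h
    rw [h, mul_zero] at hN1
    exact zero_ne_one hN1
  -- α facts
  have hα : ∀ i, α i ≠ 0 ∧ IsSquare (α i) := fun i => by
    have h1 : α i ∈ Set.range α := Set.mem_range_self i
    rw [hαrange] at h1; exact h1
  have hαn : ∀ i, α i ^ n = 1 := by
    intro i
    obtain ⟨hne, y, hy⟩ := hα i
    have hy0 : y ≠ 0 := by rintro rfl; rw [mul_zero] at hy; exact hne hy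
    have hf := FiniteField.pow_card_sub_one_eq_one y hy0
    rw [hq] at hf
    have h2 : α i ^ n = y ^ (2*n) := by rw [hy, ← sq, ← pow_mul]
    rw [h2, show 2*n = q - 1 from by omega, hf]
  -- definitions
  set c' : ℕ → F := fun k =>
    if k = 0 then d^(n+1) + ((n:F)+1)*d else if k = 1 then ((n:F)+1)*d^n + 1
      else ((n+1).choose k : F) * d^(n+1-k) with hc'
  set V : Matrix (Fin n) (Fin n) F := Matrix.of (fun i a : Fin n => α i ^ (a:ℕ)) with hV
  have hinv : Function.Involutive (fun a : Fin n => 1 - a) := fun a => sub_sub_cancel 1 a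
  set π : Equiv.Perm (Fin n) := hinv.toPerm with hπ
  have hπa : ∀ a : Fin n, π a = 1 - a := fun a => rfl
  have hsub : ∀ a : Fin n, ((1 - a : Fin n) : ℕ) = (n + 1 - (a:ℕ)) % n := by
    intro a
    rw [Fin.sub_def]
    simp only [Fin.val_one' n, Nat.mod_eq_of_lt (show 1 < n by omega)]
    have := a.isLt
    congr 1
    omega
  -- factorization
  have hDP : (Matrix.diagonal (fun a : Fin n => c' (a:ℕ)) * π.permMatrix F)
      = Matrix.of (fun a b : Fin n => if π a = b then c' (a:ℕ) else 0) := by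
    ext a b
    rw [Matrix.diagonal_mul, Equiv.Perm.permMatrix, PEquiv.toMatrix_toPEquiv_eq, Matrix.submatrix_apply, id_eq,
      Matrix.one_apply, Matrix.of_apply]
    split <;> simp
  have hfac : (Matrix.of fun i j : Fin n => (α i + d * α j) ^ (n+1))
      = V * (Matrix.diagonal (fun a : Fin n => c' (a:ℕ)) * π.permMatrix F) * V.transpose := by
    rw [hDP]
    ext i j
    simp only [Matrix.mul_apply, Matrix.transpose_apply, Matrix.of_apply, hV]
    simp only [Finset.sum_mul]
    rw [Finset.sum_comm]
    simp only [ite_mul, zero_mul, mul_ite, mul_zero, Finset.sum_ite_eq, Finset.mem_univ,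
      if_true]
    have step : ∀ a : Fin n, α i ^ (a:ℕ) * c' (a:ℕ) * α j ^ ((π a : Fin n):ℕ)
        = (fun k => α i ^ k * c' k * α j ^ ((n+1-k) % n)) (a : ℕ) := by
      intro a
      simp only [hπa, hsub]
    calc (α i + d * α j) ^ (n+1)
        = ∑ k ∈ Finset.range n, α i ^ k * c' k * α j ^ ((n+1-k) % n) := by
          rw [hc']
          exact auxKey F n hn2 d (α i) (α j) (hαn i) (hαn j)
      _ = ∑ a : Fin n, α i ^ (a:ℕ) * c' (a:ℕ) * α j ^ ((π a : Fin n):ℕ) := by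
          rw [← Fin.sum_univ_eq_sum_range (fun k => α i ^ k * c' k * α j ^ ((n+1-k) % n)) n]
          exact (Finset.sum_congr rfl fun a _ => step a).symm
  set s : F := Matrix.det (π.permMatrix F) with hsdef
  have hdet1 : Matrix.det (Matrix.of fun i j : Fin n => (α i + d * α j) ^ (n+1))
      = (V.det)^2 * s * ∏ a : Fin n, c' (a:ℕ) := by
    rw [hfac, Matrix.det_mul, Matrix.det_mul, Matrix.det_mul, Matrix.det_transpose,
      Matrix.det_diagonal, hsdef]
    ring
  have hs : s = 1 ∨ s = -1 := by
    rw [hsdef, Matrix.det_permutation]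
    rcases Int.units_eq_one_or (Equiv.Perm.sign π) with h | h <;> rw [h] <;> [left; right] <;> simp
  have hprod : ∏ a : Fin n, c' (a:ℕ) = c' 0 * (c' 1 * ∏ k ∈ Ico 2 n, c' k) := by
    rw [Fin.prod_univ_eq_prod_range c' n, range_eq_Ico,
      Finset.prod_eq_prod_Ico_succ_bot (by omega : 0 < n),
      Finset.prod_eq_prod_Ico_succ_bot (by omega : 1 < n),
      show (1:ℕ)+1 = 2 from by norm_num]
  have hmidprod : ∏ k ∈ Ico 2 n, c' k
      = ((∏ k ∈ Ico 2 n, (n+1).choose k : ℕ) : F) * d ^ (∑ k ∈ Ico 2 n, (n+1-k)) := by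
    rw [Nat.cast_prod, ← Finset.prod_pow_eq_pow_sum, ← Finset.prod_mul_distrib]
    refine Finset.prod_congr rfl fun k hk => ?_
    rw [Finset.mem_Ico] at hk
    rw [hc']
    simp only
    rw [if_neg (by omega), if_neg (by omega)]
  have hc0 : c' 0 = d^(n+1) + ((n:F)+1)*d := by rw [hc']; norm_num
  have hc1 : c' 1 = ((n:F)+1)*d^n + 1 := by rw [hc']; norm_num
  have hdq : d ^ n = 1 ∨ d ^ n = -1 := by
    have h1 : d ^ n * d ^ n = 1 := by
      rw [← pow_add, show n+n = q-1 from by omega, ← hq]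
      exact FiniteField.pow_card_sub_one_eq_one d hd
    exact mul_self_eq_one_iff.mp h1
  obtain ⟨t, u, ht, hcu⟩ : ∃ t u : F, (t = 1 ∨ t = -1) ∧ c' 0 * c' 1 = t * d * u^2 := by
    rcases hdq with h | h
    · refine ⟨1, (n:F)+2, Or.inl rfl, ?_⟩
      rw [hc0, hc1, pow_succ, h]; ring
    · refine ⟨-1, (n:F), Or.inr rfl, ?_⟩
      rw [hc0, hc1, pow_succ, h]; ring
  have hneg : IsSquare (-1 : F) := by
    refine FiniteField.isSquare_neg_one_iff.mpr ?_
    rw [hq]; omega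
  obtain ⟨r, hr⟩ := hneg
  obtain ⟨w, hw⟩ : ∃ w : F, s * t = w * w := by
    rcases hs with h | h <;> rcases ht with h' | h'
    · exact ⟨1, by rw [h, h']⟩
    · exact ⟨r, by rw [h, h', one_mul]; exact hr⟩
    · exact ⟨r, by rw [h, h', mul_one]; exact hr⟩
    · exact ⟨1, by rw [h, h']; norm_num⟩
  have hBF : ((∏ k ∈ range (m+1), (n+1).choose k : ℕ) : F)^2
      = (((n:F)+1))^2 * ((∏ k ∈ Ico 2 n, (n+1).choose k : ℕ) : F) := by
    have h5 := congrArg (fun t : ℕ => (t : F)) (auxBinom n m hnm hm1)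
    push_cast at h5
    exact_mod_cast h5
  have hBF' : ((∏ k ∈ Ico 2 n, (n+1).choose k : ℕ) : F)
      = (((∏ k ∈ range (m+1), (n+1).choose k : ℕ) : F) * (((n:F)+1))⁻¹)^2 := by
    rw [mul_pow, hBF]
    field_simp
  have hdS : d * d ^ (∑ k ∈ Ico 2 n, (n+1-k)) = d^m * (d^(m*(m-1)))^2 := by
    calc d * d ^ (∑ k ∈ Ico 2 n, (n+1-k)) = d ^ (1 + ∑ k ∈ Ico 2 n, (n+1-k)) := by
          rw [pow_add, pow_one]
      _ = d ^ (m + 2*(m*(m-1))) := by rw [auxSum n m hnm hm1]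
      _ = d^m * (d^(m*(m-1)))^2 := by rw [pow_add, mul_comm 2 (m*(m-1)), pow_mul]
  refine ⟨V.det * u * w * d^(m*(m-1)) * ((∏ k ∈ range (m+1), (n+1).choose k : ℕ) : F)
    * (((n:F)+1))⁻¹, ?_⟩
  rw [hdet1, hprod, hmidprod, hBF']
  linear_combination (V.det^2 * s * ((((∏ k ∈ range (m+1), (n+1).choose k : ℕ) : F) * (((n:F)+1))⁻¹)^2) * d ^ (∑ k ∈ Ico 2 n, (n+1-k))) * hcu
    + (V.det^2 * d * u^2 * ((((∏ k ∈ range (m+1), (n+1).choose k : ℕ) : F) * (((n:F)+1))⁻¹)^2) * d ^ (∑ k ∈ Ico 2 n, (n+1-k))) * hw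
    + (V.det^2 * u^2 * w^2 * ((((∏ k ∈ range (m+1), (n+1).choose k : ℕ) : F) * (((n:F)+1))⁻¹)^2)) * hdS
end

section
/- Let p > 3 be a prime with p ≡ 1 (mod 4), set n = (p-1)/2, and let d ∈ F_p^×. Then there exists x ∈ F_p^× (i.e., x ≠ 0) such that D(d,p) = d^{(p-1)/4} · x^2. -/
open Finset

private lemma sqmul' {F : Type*} [CommRing F] [NoZeroDivisors F] {x y : F}
    (hx : x ≠ 0 ∧ IsSquare x) (hy : y ≠ 0 ∧ IsSquare y) :
    x * y ≠ 0 ∧ IsSquare (x * y) :=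
  ⟨mul_ne_zero hx.1 hy.1, hx.2.mul hy.2⟩

/-- Let `p > 3` be a prime with `p ≡ 1 (mod 4)`, `n = (p-1)/2`, `α` an enumeration of the
nonzero squares of `F_p`, and `d ∈ F_p^×`. Then there exists a nonzero `x ∈ F_p` with
`D(d,p) = det [(α_i + d·α_j)^{(p+1)/2}] = d^{(p-1)/4} x²`. -/
theorem stmt_7 (p : ℕ) [Fact p.Prime] (hp3 : 3 < p) (hp4 : p % 4 = 1)
    (n : ℕ) (hn : n = (p - 1) / 2)
    (α : Fin n → ZMod p) (hαinj : Function.Injective α)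
    (hαrange : Set.range α = {x : ZMod p | x ≠ 0 ∧ IsSquare x})
    (d : ZMod p) (hd : d ≠ 0) :
    ∃ x : ZMod p, x ≠ 0 ∧
      Matrix.det (Matrix.of fun i j : Fin n => (α i + d * α j) ^ ((p + 1) / 2)) =
        d ^ ((p - 1) / 4) * x ^ 2 := by
  have hp : p.Prime := Fact.out
  have hp5 : 5 ≤ p := by omega
  have hpn : p = 2 * n + 1 := by omega
  have hn2 : 2 ≤ n := by omega
  have hn0 : 0 < n := by omega
  set a := (p - 1) / 4 with ha
  have hna : n = 2 * a := by omega
  have ha1 : 1 ≤ a := by omega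
  have hm : (p + 1) / 2 = n + 1 := by omega
  have hpn1 : n + 1 < p := by omega
  -- facts about α
  have hα : ∀ i, α i ≠ 0 ∧ IsSquare (α i) := by
    intro i
    have : α i ∈ Set.range α := ⟨i, rfl⟩
    rw [hαrange] at this
    exact this
  have hαpow : ∀ i, α i ^ n = 1 := by
    intro i
    obtain ⟨y, hy⟩ := (hα i).2
    have hy0 : y ≠ 0 := by
      intro h; exact (hα i).1 (by rw [hy, h, mul_zero])
    have : α i ^ n = y ^ (p - 1) := by
      rw [hy, ← sq, ← pow_mul]
      congr 1
      omega
    rw [this, ZMod.pow_card_sub_one_eq_one hy0]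
  -- the coefficient functions
  set q : ℕ → ZMod p := fun k => ((n + 1).choose k : ZMod p) * d ^ (n + 1 - k) with hq
  set c : ℕ → ZMod p :=
    fun r => ∑ k ∈ (range (n + 2)).filter (fun k => k % n = r), q k with hc
  -- the involution
  set f : Fin n → Fin n := fun r => ⟨(n + 1 - (r : ℕ)) % n, Nat.mod_lt _ hn0⟩ with hf
  have hfinv : Function.Involutive f := by
    intro r
    have hr := r.2
    apply Fin.ext
    show (n + 1 - (n + 1 - (r : ℕ)) % n) % n = (r : ℕ)
    rcases Nat.lt_or_ge (r : ℕ) 2 with h2 | h2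
    · have hmod : (n + 1) % n = 1 := by
        rw [Nat.add_mod_left n 1]; exact Nat.mod_eq_of_lt (by omega)
      interval_cases h : (r : ℕ)
      · rw [show n + 1 - 0 = n + 1 by omega, hmod]
        rw [show n + 1 - 1 = n by omega, Nat.mod_self]
      · rw [show n + 1 - 1 = n by omega, Nat.mod_self]
        rw [show n + 1 - 0 = n + 1 by omega, hmod]
    · have h1 : n + 1 - (r : ℕ) < n := by omega
      rw [Nat.mod_eq_of_lt h1]
      have : n + 1 - (n + 1 - (r : ℕ)) = (r : ℕ) := by omega
      rw [this, Nat.mod_eq_of_lt hr]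
  set σ : Equiv.Perm (Fin n) := ⟨f, f, hfinv.leftInverse, hfinv.rightInverse⟩ with hσ
  set E : Matrix (Fin n) (Fin n) (ZMod p) := Matrix.vandermonde α with hE
  set S : Matrix (Fin n) (Fin n) (ZMod p) :=
    Matrix.of (fun r s => if s = σ r then c (r : ℕ) else 0) with hS
  -- factorization
  have hmod1 : (n + 1) % n = 1 := by
    rw [Nat.add_mod_left n 1]; exact Nat.mod_eq_of_lt (by omega)
  have hA : ∀ r k : ℕ, k < n + 2 → k % n = r → (n + 1 - k) % n = (n + 1 - r) % n := by
    intro r k hk hkr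
    rcases Nat.lt_or_ge k n with h | h
    · rw [Nat.mod_eq_of_lt h] at hkr; rw [hkr]
    · rcases (by omega : k = n ∨ k = n + 1) with h2 | h2 <;> rw [h2] at hkr ⊢
      · have hr0 : r = 0 := by rw [Nat.mod_self] at hkr; omega
        subst hr0
        have e1 : n + 1 - n = 1 := by omega
        rw [e1, Nat.sub_zero, hmod1, Nat.mod_eq_of_lt (show 1 < n by omega)]
      · have hr1 : r = 1 := by rw [hmod1] at hkr; omega
        subst hr1
        have e1 : n + 1 - (n + 1) = 0 := by omega
        have e2 : n + 1 - 1 = n := by omega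
        rw [e1, e2, Nat.mod_self, Nat.zero_mod]
  have hfact : (Matrix.of fun i j : Fin n => (α i + d * α j) ^ (n + 1)) = E * S * E.transpose := by
    ext i j
    show (α i + d * α j) ^ (n + 1) = (E * S * E.transpose) i j
    have hRHS : (E * S * E.transpose) i j
        = ∑ r : Fin n, α i ^ (r : ℕ) * c (r : ℕ) * α j ^ ((n + 1 - (r : ℕ)) % n) := by
      rw [Matrix.mul_apply]
      simp_rw [Matrix.mul_apply, Finset.sum_mul]
      rw [Finset.sum_comm]
      refine Finset.sum_congr rfl fun r _ => ?_
      have h1 : ∀ s : Fin n, E i r * S r s * E.transpose s j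
          = if s = σ r then α i ^ (r : ℕ) * c (r : ℕ) * α j ^ ((n + 1 - (r : ℕ)) % n) else 0 := by
        intro s
        by_cases h : s = σ r
        · subst h
          have h2 : ((σ r : Fin n) : ℕ) = (n + 1 - (r : ℕ)) % n := rfl
          simp [hS, hE, Matrix.vandermonde_apply, h2, mul_assoc]
        · simp [hS, h]
      simp_rw [h1]
      simp
    have hLHS : (α i + d * α j) ^ (n + 1)
        = ∑ r ∈ range n, α i ^ r * c r * α j ^ ((n + 1 - r) % n) := by
      rw [add_pow]
      have hmaps : ∀ k ∈ range (n + 1 + 1), k % n ∈ range n :=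
        fun k _ => Finset.mem_range.mpr (Nat.mod_lt _ hn0)
      rw [← Finset.sum_fiberwise_of_maps_to hmaps
        (fun k => α i ^ k * (d * α j) ^ (n + 1 - k) * ((n + 1).choose k : ZMod p))]
      refine Finset.sum_congr rfl fun r hr => ?_
      have : ∀ k ∈ (range (n + 1 + 1)).filter (fun k => k % n = r),
          α i ^ k * (d * α j) ^ (n + 1 - k) * ((n + 1).choose k : ZMod p)
            = α i ^ r * q k * α j ^ ((n + 1 - r) % n) := by
        intro k hk
        rw [Finset.mem_filter, Finset.mem_range] at hk
        rw [mul_pow, pow_eq_pow_mod k (hαpow i), pow_eq_pow_mod (n + 1 - k) (hαpow j),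
          hk.2, hA r k (by omega) hk.2, hq]
        ring
      rw [Finset.sum_congr rfl this, ← Finset.sum_mul, ← Finset.mul_sum, hc]
    rw [hLHS, hRHS, ← Fin.sum_univ_eq_sum_range
      (fun r => α i ^ r * c r * α j ^ ((n + 1 - r) % n)) n]
  have hdetE : E.det ≠ 0 := Matrix.det_vandermonde_ne_zero_iff.mpr hαinj
  have hSdecomp : S = Matrix.diagonal (fun r : Fin n => c (r : ℕ)) * σ.permMatrix (ZMod p) := by
    ext r s
    rw [Matrix.diagonal_mul]
    simp only [hS, Matrix.of_apply, Equiv.Perm.permMatrix, PEquiv.toMatrix_apply,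
      Equiv.toPEquiv_apply, Option.mem_def, Option.some.injEq]
    by_cases h : s = σ r
    · rw [if_pos h, if_pos h.symm, mul_one]
    · rw [if_neg h, if_neg (fun hh => h hh.symm), mul_zero]
  have hdetS : S.det = ((Equiv.Perm.sign σ : ℤ) : ZMod p) * ∏ r ∈ range n, c r := by
    rw [hSdecomp, Matrix.det_mul, Matrix.det_diagonal, Matrix.det_permutation,
      mul_comm, ← Fin.prod_univ_eq_prod_range (fun r => c r) n]
  -- filters
  have hfil0 : (range (n + 2)).filter (fun k => k % n = 0) = {0, n} := by
    ext k
    simp only [Finset.mem_filter, Finset.mem_range, Finset.mem_insert, Finset.mem_singleton]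
    constructor
    · rintro ⟨hk, hk0⟩
      rcases (by omega : k < n ∨ k = n ∨ k = n + 1) with h | h | h
      · rw [Nat.mod_eq_of_lt h] at hk0; omega
      · omega
      · rw [h, hmod1] at hk0; omega
    · rintro (rfl | h)
      · exact ⟨by omega, Nat.zero_mod n⟩
      · rw [h]; exact ⟨by omega, Nat.mod_self n⟩
  have hfil1 : (range (n + 2)).filter (fun k => k % n = 1) = {1, n + 1} := by
    ext k
    simp only [Finset.mem_filter, Finset.mem_range, Finset.mem_insert, Finset.mem_singleton]
    constructor
    · rintro ⟨hk, hk0⟩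
      rcases (by omega : k < n ∨ k = n ∨ k = n + 1) with h | h | h
      · rw [Nat.mod_eq_of_lt h] at hk0; omega
      · rw [h, Nat.mod_self] at hk0; omega
      · omega
    · rintro (rfl | h)
      · exact ⟨by omega, Nat.mod_eq_of_lt (by omega)⟩
      · rw [h]; exact ⟨by omega, hmod1⟩
  have hfilmid : ∀ r, 2 ≤ r → r < n →
      (range (n + 2)).filter (fun k => k % n = r) = {r} := by
    intro r h2 hr
    ext k
    simp only [Finset.mem_filter, Finset.mem_range, Finset.mem_singleton]
    constructor
    · rintro ⟨hk, hk0⟩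
      rcases (by omega : k < n ∨ k = n ∨ k = n + 1) with h | h | h
      · rw [Nat.mod_eq_of_lt h] at hk0; omega
      · rw [h, Nat.mod_self] at hk0; omega
      · rw [h, hmod1] at hk0; omega
    · intro h
      rw [h]; exact ⟨by omega, Nat.mod_eq_of_lt hr⟩
  -- values of c
  have hc0 : c 0 = d ^ (n + 1) + ((n + 1 : ℕ) : ZMod p) * d := by
    show ∑ k ∈ (range (n + 2)).filter (fun k => k % n = 0), q k = _
    rw [hfil0, Finset.sum_pair (by omega : (0 : ℕ) ≠ n)]
    show ((n + 1).choose 0 : ZMod p) * d ^ (n + 1 - 0)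
        + ((n + 1).choose n : ZMod p) * d ^ (n + 1 - n) = _
    rw [Nat.choose_zero_right, Nat.choose_succ_self_right,
      (by omega : n + 1 - 0 = n + 1), (by omega : n + 1 - n = 1)]
    push_cast
    ring
  have hc1 : c 1 = ((n + 1 : ℕ) : ZMod p) * d ^ n + 1 := by
    show ∑ k ∈ (range (n + 2)).filter (fun k => k % n = 1), q k = _
    rw [hfil1, Finset.sum_pair (by omega : (1 : ℕ) ≠ n + 1)]
    show ((n + 1).choose 1 : ZMod p) * d ^ (n + 1 - 1)
        + ((n + 1).choose (n + 1) : ZMod p) * d ^ (n + 1 - (n + 1)) = _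
    rw [Nat.choose_one_right, Nat.choose_self, (by omega : n + 1 - 1 = n), Nat.sub_self]
    push_cast
    ring
  have hcmid : ∀ r, 2 ≤ r → r < n → c r = q r := by
    intro r h2 hr
    show ∑ k ∈ (range (n + 2)).filter (fun k => k % n = r), q k = q r
    rw [hfilmid r h2 hr, Finset.sum_singleton]
  -- product of the c's
  have hprodsplit : ∏ r ∈ range n, c r = c 0 * (c 1 * ∏ r ∈ Ico 2 n, q r) := by
    rw [Finset.range_eq_Ico, Finset.prod_eq_prod_Ico_succ_bot hn0,
      Finset.prod_eq_prod_Ico_succ_bot (by omega : 1 < n)]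
    congr 1
    congr 1
    exact Finset.prod_congr rfl fun r hr => by
      rw [Finset.mem_Ico] at hr; exact hcmid r hr.1 hr.2
  set B : ZMod p := ∏ r ∈ Ico 2 n, (((n + 1).choose r : ℕ) : ZMod p) with hB
  set K : ℕ := ∑ r ∈ Ico 2 n, (n + 1 - r) with hK
  have hqprod : ∏ r ∈ Ico 2 n, q r = B * d ^ K := by
    rw [hB, hK, ← Finset.prod_pow_eq_pow_sum, ← Finset.prod_mul_distrib]
  -- K + 1 = a + 2t
  have hKa : ∃ t, K + 1 = a + 2 * t := by
    rcases (by omega : a = 1 ∨ 2 ≤ a) with hA1 | hA2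
    · refine ⟨0, ?_⟩
      have hico : Finset.Ico 2 n = ∅ := by
        rw [(by omega : n = 2)]; exact Finset.Ico_self 2
      have : K = 0 := by rw [hK, hico, Finset.sum_empty]
      omega
    · set e := a - 2 with he'
      have hae : a = e + 2 := by omega
      have hne : n - 2 = 2 * e + 2 := by omega
      have h1 : K = ∑ i ∈ range (n - 2), (n + 1 - (2 + i)) := by
        rw [hK, Finset.sum_Ico_eq_sum_range]
      have h2 : ∀ i ∈ range (n - 2), n + 1 - (2 + i) = (n - 2) - 1 - i + 2 := by
        intro i hi; rw [Finset.mem_range] at hi; omega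
      have h3 : K = ∑ j ∈ range (n - 2), (j + 2) := by
        rw [h1, Finset.sum_congr rfl h2, Finset.sum_range_reflect (fun j => j + 2) (n - 2)]
      rw [Finset.sum_add_distrib, Finset.sum_const, Finset.card_range, smul_eq_mul] at h3
      have h4 := Finset.sum_range_id_mul_two (n - 2)
      rw [hne] at h3 h4
      have h5 : (2 * e + 2) * (2 * e + 2 - 1) = 2 * ((e + 1) * (2 * e + 1)) := by
        rw [(by omega : 2 * e + 2 - 1 = 2 * e + 1)]; ring
      rw [h5] at h4
      refine ⟨(e + 1) * (e + 2), ?_⟩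
      have h6 : (e + 1) * (2 * e + 1) + 3 * e + 3 = 2 * ((e + 1) * (e + 2)) := by ring
      omega
  -- factorials and binomial coefficients are nonzero mod p
  have hfac : ∀ k, k ≤ n + 1 → ((Nat.factorial k : ℕ) : ZMod p) ≠ 0 := by
    intro k hk h0
    rw [ZMod.natCast_eq_zero_iff] at h0
    exact absurd ((Nat.Prime.dvd_factorial hp).mp h0) (by omega)
  have hch : ∀ k, k ≤ n + 1 → ((((n + 1).choose k : ℕ)) : ZMod p) ≠ 0 := by
    intro k hk h0
    rw [ZMod.natCast_eq_zero_iff] at h0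
    have hdvd : p ∣ Nat.factorial (n + 1) := h0.trans
      ⟨Nat.factorial k * Nat.factorial (n + 1 - k), by rw [← Nat.choose_mul_factorial_mul_factorial hk]; ring⟩
    exact absurd ((Nat.Prime.dvd_factorial hp).mp hdvd) (by omega)
  -- the key product identity for binomial coefficients
  have hkey : (∏ k ∈ range (n + 2), (((n + 1).choose k : ℕ) : ZMod p))
      * (∏ k ∈ range (n + 2), ((Nat.factorial k : ℕ) : ZMod p)) ^ 2
      = ((Nat.factorial (n + 1) : ℕ) : ZMod p) ^ (n + 2) := by
    have hrefl : ∏ k ∈ range (n + 2), ((Nat.factorial (n + 2 - 1 - k) : ℕ) : ZMod p)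
        = ∏ k ∈ range (n + 2), ((Nat.factorial k : ℕ) : ZMod p) :=
      Finset.prod_range_reflect (fun k => ((Nat.factorial k : ℕ) : ZMod p)) (n + 2)
    calc (∏ k ∈ range (n + 2), (((n + 1).choose k : ℕ) : ZMod p))
        * (∏ k ∈ range (n + 2), ((Nat.factorial k : ℕ) : ZMod p)) ^ 2
        = (∏ k ∈ range (n + 2), (((n + 1).choose k : ℕ) : ZMod p))
          * ((∏ k ∈ range (n + 2), ((Nat.factorial k : ℕ) : ZMod p))
            * (∏ k ∈ range (n + 2), ((Nat.factorial (n + 2 - 1 - k) : ℕ) : ZMod p))) := by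
          rw [hrefl]; ring
      _ = ∏ k ∈ range (n + 2), ((((n + 1).choose k : ℕ) : ZMod p)
            * (((Nat.factorial k : ℕ) : ZMod p) * ((Nat.factorial (n + 2 - 1 - k) : ℕ) : ZMod p))) := by
          rw [Finset.prod_mul_distrib, Finset.prod_mul_distrib]
      _ = ∏ _k ∈ range (n + 2), ((Nat.factorial (n + 1) : ℕ) : ZMod p) := by
          refine Finset.prod_congr rfl fun k hk => ?_
          rw [Finset.mem_range] at hk
          have hk1 : k ≤ n + 1 := by omega
          have hcc := Nat.choose_mul_factorial_mul_factorial hk1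
          rw [(by omega : n + 2 - 1 - k = n + 1 - k), ← hcc]
          push_cast
          ring
      _ = ((Nat.factorial (n + 1) : ℕ) : ZMod p) ^ (n + 2) := by
          rw [Finset.prod_const, Finset.card_range]
  have hQ0 : (∏ k ∈ range (n + 2), ((Nat.factorial k : ℕ) : ZMod p)) ≠ 0 :=
    Finset.prod_ne_zero_iff.mpr fun k hk =>
      hfac k (by rw [Finset.mem_range] at hk; omega)
  have hPsplit : ∏ k ∈ range (n + 2), (((n + 1).choose k : ℕ) : ZMod p)
      = ((n + 1 : ℕ) : ZMod p) * (((n + 1 : ℕ) : ZMod p) * B) := by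
    rw [show n + 2 = n + 1 + 1 from rfl, Finset.prod_range_succ, Finset.prod_range_succ,
      Finset.range_eq_Ico, Finset.prod_eq_prod_Ico_succ_bot hn0,
      Finset.prod_eq_prod_Ico_succ_bot (by omega : 1 < n),
      Nat.choose_zero_right, Nat.choose_one_right, Nat.choose_succ_self_right,
      Nat.choose_self, hB]
    push_cast
    ring
  -- (n+1 : ZMod p) is the inverse of 2, in particular nonzero
  have hμ : (2 : ZMod p) * ((n + 1 : ℕ) : ZMod p) = 1 := by
    have h1 : ((2 * (n + 1) : ℕ) : ZMod p) = ((p + 1 : ℕ) : ZMod p) := by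
      rw [(by omega : 2 * (n + 1) = p + 1)]
    push_cast at h1
    rw [ZMod.natCast_self, zero_add] at h1
    push_cast
    exact h1
  have hμ0 : ((n + 1 : ℕ) : ZMod p) ≠ 0 := by
    intro h; rw [h, mul_zero] at hμ; exact one_ne_zero hμ.symm
  have h30 : ((3 : ℕ) : ZMod p) ≠ 0 := by
    intro h0
    rw [ZMod.natCast_eq_zero_iff] at h0
    have := Nat.le_of_dvd (by norm_num) h0
    omega
  -- B is a nonzero square
  have hB0 : B ≠ 0 := by
    rw [hB]
    refine Finset.prod_ne_zero_iff.mpr fun r hr => ?_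
    rw [Finset.mem_Ico] at hr
    exact hch r (by omega)
  have hBsq : IsSquare B := by
    have hn2a : n + 2 = 2 * (a + 1) := by omega
    have hBsq' : B * (((n + 1 : ℕ) : ZMod p) * ∏ k ∈ range (n + 2), ((Nat.factorial k : ℕ) : ZMod p)) ^ 2
        = (((Nat.factorial (n + 1) : ℕ) : ZMod p) ^ (a + 1)) ^ 2 := by
      rw [← pow_mul, mul_comm (a + 1) 2, ← hn2a, ← hkey, hPsplit]
      ring
    set MQ : ZMod p := ((n + 1 : ℕ) : ZMod p) * ∏ k ∈ range (n + 2), ((Nat.factorial k : ℕ) : ZMod p)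
      with hMQdef
    have hMQ : MQ ≠ 0 := mul_ne_zero hμ0 hQ0
    refine ⟨((Nat.factorial (n + 1) : ℕ) : ZMod p) ^ (a + 1) * MQ⁻¹, ?_⟩
    calc B = B * (MQ * MQ⁻¹) ^ 2 := by rw [mul_inv_cancel₀ hMQ]; ring
      _ = (B * MQ ^ 2) * (MQ⁻¹) ^ 2 := by ring
      _ = (((Nat.factorial (n + 1) : ℕ) : ZMod p) ^ (a + 1)) ^ 2 * (MQ⁻¹) ^ 2 := by rw [hBsq']
      _ = ((Nat.factorial (n + 1) : ℕ) : ZMod p) ^ (a + 1) * MQ⁻¹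
          * (((Nat.factorial (n + 1) : ℕ) : ZMod p) ^ (a + 1) * MQ⁻¹) := by ring
  -- d ^ n = ± 1
  have he : d ^ n = 1 ∨ d ^ n = -1 := by
    have h1 : d ^ n * d ^ n = 1 := by
      rw [← pow_add, (by omega : n + n = p - 1), ZMod.pow_card_sub_one_eq_one hd]
    exact mul_self_eq_one_iff.mp h1
  have hneg : IsSquare (-1 : ZMod p) := ZMod.exists_sq_eq_neg_one_iff.mpr (by omega)
  -- extract the W factor from c 0 * c 1
  obtain ⟨W, hc01W, hW0, hWsq⟩ :
      ∃ W, (d ^ (n + 1) + ((n + 1 : ℕ) : ZMod p) * d)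
          * (((n + 1 : ℕ) : ZMod p) * d ^ n + 1) = d * W ∧ W ≠ 0 ∧ IsSquare W := by
    rcases he with h1 | h1
    · have hμ1 : ((n + 1 : ℕ) : ZMod p) + 1 ≠ 0 := by
        intro h; apply h30; push_cast
        push_cast at h hμ
        linear_combination 2 * h - hμ
      refine ⟨(((n + 1 : ℕ) : ZMod p) + 1) * (((n + 1 : ℕ) : ZMod p) + 1), ?_,
        mul_ne_zero hμ1 hμ1, ⟨_, rfl⟩⟩
      rw [pow_succ, h1]; ring
    · have hμm1 : ((n + 1 : ℕ) : ZMod p) - 1 ≠ 0 := by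
        intro h
        apply one_ne_zero (α := ZMod p)
        push_cast at h hμ
        linear_combination hμ - 2 * h
      refine ⟨(-1) * ((((n + 1 : ℕ) : ZMod p) - 1) * (((n + 1 : ℕ) : ZMod p) - 1)), ?_,
        mul_ne_zero (neg_ne_zero.mpr one_ne_zero) (mul_ne_zero hμm1 hμm1),
        hneg.mul ⟨_, rfl⟩⟩
      rw [pow_succ, h1]; ring
  -- sign of σ as an element of ZMod p
  have hεpair : ((Equiv.Perm.sign σ : ℤ) : ZMod p) ≠ 0
      ∧ IsSquare (((Equiv.Perm.sign σ : ℤ) : ZMod p)) := by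
    rcases Int.units_eq_one_or (Equiv.Perm.sign σ) with h | h <;> rw [h]
    · simp
    · simp only [Units.val_neg, Units.val_one, Int.cast_neg, Int.cast_one]
      exact ⟨neg_ne_zero.mpr one_ne_zero, hneg⟩
  -- final assembly
  obtain ⟨t, ht⟩ := hKa
  have hdK : d ^ K * d = d ^ a * (d ^ t * d ^ t) := by
    rw [← pow_succ, ht, pow_add, two_mul, pow_add]
  have hX := sqmul' (sqmul' ⟨mul_ne_zero hdetE hdetE, ⟨Matrix.det E, rfl⟩⟩ hεpair)
    (sqmul' ⟨hW0, hWsq⟩ (sqmul' ⟨hB0, hBsq⟩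
      ⟨mul_ne_zero (pow_ne_zero t hd) (pow_ne_zero t hd), ⟨d ^ t, rfl⟩⟩))
  obtain ⟨x, hx⟩ := hX.2
  have hx0 : x ≠ 0 := by
    intro h; apply hX.1; rw [hx, h, mul_zero]
  refine ⟨x, hx0, ?_⟩
  simp only [hm]
  rw [hfact, Matrix.det_mul, Matrix.det_mul, Matrix.det_transpose, hdetS, hprodsplit,
    hqprod, hc0, hc1]
  rw [(by rw [sq] : x ^ 2 = x * x), ← hx]
  calc Matrix.det E * (((Equiv.Perm.sign σ : ℤ) : ZMod p)
        * ((d ^ (n + 1) + ((n + 1 : ℕ) : ZMod p) * d)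
          * ((((n + 1 : ℕ) : ZMod p) * d ^ n + 1) * (B * d ^ K)))) * Matrix.det E
      = ((d ^ (n + 1) + ((n + 1 : ℕ) : ZMod p) * d)
          * (((n + 1 : ℕ) : ZMod p) * d ^ n + 1)) * d ^ K
        * (Matrix.det E * Matrix.det E * (((Equiv.Perm.sign σ : ℤ) : ZMod p) * B)) := by
        ring
    _ = d * W * d ^ K
        * (Matrix.det E * Matrix.det E * (((Equiv.Perm.sign σ : ℤ) : ZMod p) * B)) := by
        rw [hc01W]
    _ = (d ^ K * d)
        * (W * (Matrix.det E * Matrix.det E * (((Equiv.Perm.sign σ : ℤ) : ZMod p) * B))) := by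
        ring
    _ = (d ^ a * (d ^ t * d ^ t))
        * (W * (Matrix.det E * Matrix.det E * (((Equiv.Perm.sign σ : ℤ) : ZMod p) * B))) := by
        rw [hdK]
    _ = d ^ a * (Matrix.det E * Matrix.det E * (((Equiv.Perm.sign σ : ℤ) : ZMod p) : ZMod p)
          * (W * (B * (d ^ t * d ^ t)))) := by ring
end

section
/- Let q = 2n+1 be an odd prime power with char(F_q) > 3 and q ≡ 3 (mod 4), and let d ∈ F_q^×. Then there exists y ∈ F_q such that D(d,q) = d^{(q+1)/4} · (-1)^{(q-3)/4} · C((q+1)/2, (q+1)/4) · y^2, where C((q+1)/2, (q+1)/4) is the binomial coefficient, regarded as an element of F_q via the natural map ℕ → F_q. -/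
open Finset

private lemma prod_peel2 {M : Type*} [CommMonoid M] (m : ℕ) (f : ℕ → M) :
    ∏ k ∈ range (2+m), f k = f 0 * f 1 * ∏ k ∈ range m, f (2+k) := by
  rw [prod_range_add]
  congr 1
  rw [prod_range_succ, prod_range_one]

private lemma sum_peel2 {M : Type*} [AddCommMonoid M] (m : ℕ) (f : ℕ → M) :
    ∑ k ∈ range (2+m), f k = f 0 + f 1 + ∑ k ∈ range m, f (2+k) := by
  rw [sum_range_add]
  congr 1
  rw [sum_range_succ, sum_range_one]

private lemma choose_pred_aux (s : ℕ) : (2*s+4).choose (2*s+3) = 2*s+4 := by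
  have := Nat.choose_symm (n := 2*s+4) (k := 1) (by omega)
  simpa [Nat.choose_one_right, show 2*s+4-1 = 2*s+3 by omega] using this

private lemma choose_prod_aux (s : ℕ) :
    (2*s+4)^2 * ∏ k ∈ range (2*s+1), Nat.choose (2*s+4) (2+k)
      = (∏ k ∈ range (s+2), Nat.choose (2*s+4) k)^2 * Nat.choose (2*s+4) (s+2) := by
  have hfull1 : ∏ k ∈ range (2*s+5), Nat.choose (2*s+4) k
      = (2*s+4)^2 * ∏ k ∈ range (2*s+1), Nat.choose (2*s+4) (2+k) := by
    rw [show 2*s+5 = 2+(2*s+3) by omega, prod_peel2]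
    rw [show 2*s+3 = (2*s+1)+1+1 by omega, prod_range_succ, prod_range_succ]
    rw [show 2+(2*s+1+1) = 2*s+4 by omega, show 2+(2*s+1) = 2*s+3 by omega]
    rw [choose_pred_aux, Nat.choose_self, Nat.choose_zero_right, Nat.choose_one_right]
    ring
  have hfull2 : ∏ k ∈ range (2*s+5), Nat.choose (2*s+4) k
      = (∏ k ∈ range (s+2), Nat.choose (2*s+4) k)^2 * Nat.choose (2*s+4) (s+2) := by
    rw [show 2*s+5 = (s+2)+(s+3) by omega, prod_range_add]
    have h0 := prod_range_succ' (fun x => Nat.choose (2*s+4) ((s+2)+x)) (s+2)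
    rw [show s+3 = (s+2)+1 by omega, h0]
    have h1 : ∀ i ∈ range (s+2), Nat.choose (2*s+4) ((s+2)+(i+1))
        = Nat.choose (2*s+4) (s+2-1-i) := by
      intro i hi
      simp only [mem_range] at hi
      have h2 := Nat.choose_symm (n := 2*s+4) (k := (s+2)+(i+1)) (by omega)
      rw [show 2*s+4-((s+2)+(i+1)) = s+2-1-i by omega] at h2
      exact h2.symm
    rw [prod_congr rfl h1, prod_range_reflect (fun j => Nat.choose (2*s+4) j) (s+2)]
    rw [show (s+2)+0 = s+2 by omega]
    ring
  rw [← hfull1]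
  exact hfull2

private lemma isSquare_prod {ι M : Type*} [CommMonoid M] (s : Finset ι) (f : ι → M)
    (h : ∀ i ∈ s, IsSquare (f i)) : IsSquare (∏ i ∈ s, f i) :=
  Finset.prod_induction f IsSquare (fun _ _ => IsSquare.mul) IsSquare.one h

/-- Let `q = 2n+1` be an odd prime power with `char F_q > 3` and `q ≡ 3 (mod 4)`, `α` an
enumeration of the nonzero squares of `F_q`, and `d ∈ F_q^×`. Then there exists `y ∈ F_q` with
`D(d,q) = det [(α_i + d·α_j)^{(q+1)/2}] = d^{(q+1)/4} (-1)^{(q-3)/4} C((q+1)/2,(q+1)/4) y²`,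
where the binomial coefficient is regarded in `F_q`. -/
theorem stmt_8 (F : Type) [Field F] [Fintype F] [DecidableEq F]
    (q n : ℕ) (hqn : q = 2 * n + 1) (hq : Fintype.card F = q)
    (hchar : 3 < ringChar F) (hq4 : q % 4 = 3)
    (α : Fin n → F) (hαinj : Function.Injective α)
    (hαrange : Set.range α = {x : F | x ≠ 0 ∧ IsSquare x})
    (d : F) (hd : d ≠ 0) :
    ∃ y : F,
      Matrix.det (Matrix.of fun i j : Fin n => (α i + d * α j) ^ ((q + 1) / 2)) =
        d ^ ((q + 1) / 4) * (-1 : F) ^ ((q - 3) / 4) *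
          (Nat.choose ((q + 1) / 2) ((q + 1) / 4) : F) * y ^ 2 := by
  classical
  have hqF : (q : F) = 0 := by rw [← hq]; exact Nat.cast_card_eq_zero F
  have hdvd : ringChar F ∣ q := (CharP.cast_eq_zero_iff F (ringChar F) q).mp hqF
  have hq7 : 7 ≤ q := by
    have := Nat.le_of_dvd (by omega) hdvd
    omega
  obtain ⟨s, hs⟩ : ∃ s, n = 2*s+3 := ⟨(n-3)/2, by omega⟩
  subst hs
  have hq' : q = 4*s+7 := by omega
  rw [show (q+1)/2 = 2*s+4 by omega, show (q+1)/4 = s+2 by omega,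
      show (q-3)/4 = s+1 by omega]
  have hrc2 : ringChar F ≠ 2 := by omega
  have hc2 : ((2*s+4 : ℕ) : F) * 2 = 1 := by
    have h0 : ((4*s+7 : ℕ) : F) = 0 := by rw [← hq']; exact_mod_cast hqF
    push_cast at h0 ⊢
    linear_combination h0
  have hc2ne : ((2*s+4 : ℕ) : F) ≠ 0 := by
    intro h
    rw [h, zero_mul] at hc2
    exact zero_ne_one hc2
  have hα : ∀ j, α j ≠ 0 ∧ IsSquare (α j) := fun j => by
    have hj : α j ∈ Set.range α := ⟨j, rfl⟩
    rw [hαrange] at hj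
    exact hj
  have hα0 : ∀ j, α j ≠ 0 := fun j => (hα j).1
  have hαn : ∀ j, α j ^ (2*s+3) = 1 := by
    intro j
    obtain ⟨r, hr⟩ := (hα j).2
    have hr0 : r ≠ 0 := by
      rintro rfl
      exact hα0 j (by rw [hr, mul_zero])
    have h1 := FiniteField.pow_card_sub_one_eq_one r hr0
    rw [hq] at h1
    calc α j ^ (2*s+3) = (r*r) ^ (2*s+3) := by rw [hr]
    _ = r ^ (q-1) := by rw [← sq, ← pow_mul]; congr 1; omega
    _ = 1 := h1
  have hα1 : ∀ j, α j ^ (2*s+4) = α j := fun j => by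
    rw [show 2*s+4 = (2*s+3)+1 by omega, pow_succ, hαn, one_mul]
  have hdd : d ^ (2*s+3) = 1 ∨ d ^ (2*s+3) = -1 := by
    apply mul_self_eq_one_iff.mp
    have h1 := FiniteField.pow_card_sub_one_eq_one d hd
    rw [hq] at h1
    rw [← pow_add]
    calc d ^ (2*s+3+(2*s+3)) = d ^ (q-1) := by congr 1; omega
    _ = 1 := h1
  have hd4 : d ^ (2*s+4) = d ^ (2*s+3) * d := by
    rw [← pow_succ]
  set V : F := ∏ i : Fin (2*s+3), ∏ j ∈ Finset.Ioi i, (α j - α i) with hV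
  set S : F := ∏ i : Fin (2*s+3), ∏ j ∈ Finset.Ioi i, (α i * α j)⁻¹ with hSdef
  set γ : ℕ → F := fun k =>
    if k = 0 then d^(2*s+4) + ((2*s+4 : ℕ) : F) * d
    else if k = 1 then ((2*s+4 : ℕ) : F) * d^(2*s+3) + 1
    else ((2*s+4).choose k : F) * d^(2*s+4-k) with hγ
  have hγ0 : γ 0 = d^(2*s+4) + ((2*s+4 : ℕ) : F) * d := by
    simp only [hγ, if_pos rfl]
  have hγ1 : γ 1 = ((2*s+4 : ℕ) : F) * d^(2*s+3) + 1 := by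
    simp [hγ]
  have hγ2 : ∀ k : ℕ, γ (2+k) = ((2*s+4).choose (2+k) : F) * d^(2*s+4-(2+k)) := by
    intro k
    simp only [hγ]
    rw [if_neg (by omega), if_neg (by omega)]
  set B : Matrix (Fin (2*s+3)) (Fin (2*s+3)) F :=
    Matrix.of fun k j => γ (k : ℕ) * (α j * ((α j)⁻¹) ^ (k : ℕ)) with hB

  -- Step 1 : factorization
  have hβpow : ∀ (j : Fin (2*s+3)) (k : ℕ), k ≤ 2*s+3 →
      α j * ((α j)⁻¹) ^ k = α j ^ (2*s+4-k) := by
    intro j k hk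
    apply mul_right_cancel₀ (pow_ne_zero k (hα0 j))
    rw [← pow_add, show 2*s+4-k+k = 2*s+4 by omega, hα1]
    rw [mul_assoc, ← mul_pow, inv_mul_cancel₀ (hα0 j), one_pow, mul_one]
  have hfact : (Matrix.of fun i j : Fin (2*s+3) => (α i + d * α j) ^ (2*s+4))
      = Matrix.vandermonde α * B := by
    ext i j
    rw [Matrix.mul_apply]
    simp only [Matrix.of_apply, Matrix.vandermonde_apply, hB]
    rw [add_pow]
    rw [Fin.sum_univ_eq_sum_range
      (fun k => α i ^ k * (γ k * (α j * ((α j)⁻¹) ^ k))) (2*s+3)]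
    set g : ℕ → F := fun k =>
      α i ^ k * (d * α j) ^ (2*s+4-k) * ((2*s+4).choose k : F) with hg
    have e1 : ∑ k ∈ range (2*s+4+1), g k
        = g 0 + g 1 + ((∑ k ∈ range (2*s+1), g (2+k)) + g (2+(2*s+1)) + g (2+(2*s+1+1))) := by
      rw [show 2*s+4+1 = 2+(2*s+3) by omega, sum_peel2]
      rw [show 2*s+3 = 2*s+1+1+1 by omega, Finset.sum_range_succ, Finset.sum_range_succ]
    have e2 : α i ^ 0 * (γ 0 * (α j * ((α j)⁻¹) ^ 0)) = g 0 + g (2+(2*s+1)) := by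
      simp only [hg]
      rw [hγ0]
      rw [show 2+(2*s+1) = 2*s+3 by omega, show 2*s+4-0 = 2*s+4 by omega,
        show 2*s+4-(2*s+3) = 1 by omega]
      rw [Nat.choose_zero_right, choose_pred_aux]
      rw [pow_zero, pow_zero, mul_pow, hα1 j, hαn i, pow_one, Nat.cast_one]
      ring
    have e3 : α i ^ 1 * (γ 1 * (α j * ((α j)⁻¹) ^ 1)) = g 1 + g (2+(2*s+1+1)) := by
      simp only [hg]
      rw [hγ1]
      rw [show 2+(2*s+1+1) = 2*s+4 by omega, show 2*s+4-1 = 2*s+3 by omega,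
        show 2*s+4-(2*s+4) = 0 by omega]
      rw [Nat.choose_one_right, Nat.choose_self]
      rw [pow_one, pow_one, mul_inv_cancel₀ (hα0 j), mul_pow, hαn j, hα1 i,
        pow_zero, Nat.cast_one]
      ring
    have e4 : ∀ k ∈ range (2*s+1), α i ^ (2+k) * (γ (2+k) * (α j * ((α j)⁻¹) ^ (2+k)))
        = g (2+k) := by
      intro k hk
      simp only [mem_range] at hk
      simp only [hg]
      rw [hγ2, hβpow j (2+k) (by omega), mul_pow]
      ring
    rw [e1]
    rw [show 2*s+3 = 2+(2*s+1) by omega, sum_peel2]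
    beta_reduce
    rw [e2, e3, Finset.sum_congr rfl e4]
    ring

  -- Step 2 : determinant of B
  have hNeg : (∏ i : Fin (2*s+3), ∏ j ∈ Finset.Ioi i, (-1 : F)) = (-1:F)^(s+1) := by
    have h1 : ∀ i : Fin (2*s+3), ∏ j ∈ Finset.Ioi i, (-1:F)
        = (-1:F)^((Finset.Ioi i).card) := fun i => by rw [Finset.prod_const]
    rw [Finset.prod_congr rfl (fun i _ => h1 i), Finset.prod_pow_eq_pow_sum]
    have hsum : ∑ i : Fin (2*s+3), (Finset.Ioi i).card = 2*(s*s)+5*s+3 := by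
      simp only [Fin.card_Ioi]
      rw [Fin.sum_univ_eq_sum_range (fun k => 2*s+3-1-k) (2*s+3)]
      rw [Finset.sum_range_reflect (fun j => j) (2*s+3)]
      have h2 := Finset.sum_range_id_mul_two (2*s+3)
      have h3 : (2*s+3)*(2*s+3-1) = (2*(s*s)+5*s+3)*2 := by
        rw [show 2*s+3-1 = 2*s+2 by omega]; ring
      rw [h3] at h2
      exact Nat.eq_of_mul_eq_mul_right (by norm_num) h2
    rw [hsum, show 2*(s*s)+5*s+3 = 2*(s*s+2*s+1)+(s+1) by ring]
    rw [pow_add, pow_mul, neg_one_sq, one_pow]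
    try rw [one_mul]
  have hdetB : B.det = (∏ k ∈ range (2*s+3), γ k) *
      ((∏ j, α j) * ((-1 : F)^(s+1) * (S * V))) := by
    have h1 : B.det = (∏ k : Fin (2*s+3), γ (k:ℕ)) *
        (Matrix.of fun (k j : Fin (2*s+3)) => α j * ((α j)⁻¹) ^ (k:ℕ)).det :=
      Matrix.det_mul_column _ _
    have h2 : (Matrix.of fun (k j : Fin (2*s+3)) => α j * ((α j)⁻¹) ^ (k:ℕ)).det
        = (∏ j, α j) * (Matrix.of fun (k j : Fin (2*s+3)) => ((α j)⁻¹) ^ (k:ℕ)).det :=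
      Matrix.det_mul_row _ _
    have h3 : (Matrix.of fun (k j : Fin (2*s+3)) => ((α j)⁻¹) ^ (k:ℕ))
        = (Matrix.vandermonde (fun j => (α j)⁻¹)).transpose := by
      ext k j
      rfl
    have h5 : ∀ i : Fin (2*s+3), ∀ j ∈ Finset.Ioi i,
        (α j)⁻¹ - (α i)⁻¹ = (-1 : F) * ((α i * α j)⁻¹ * (α j - α i)) := by
      intro i j _
      have hi := hα0 i
      have hj := hα0 j
      field_simp
      try ring
      try exact Or.inl trivial
    have h6 : (Matrix.vandermonde (fun j => (α j)⁻¹)).det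
        = (∏ i : Fin (2*s+3), ∏ j ∈ Finset.Ioi i, (-1:F)) * (S * V) := by
      rw [Matrix.det_vandermonde]
      rw [Finset.prod_congr rfl (fun i _ => Finset.prod_congr rfl (h5 i))]
      rw [hSdef, hV]
      simp only [Finset.prod_mul_distrib]
    rw [h1, h2, h3, Matrix.det_transpose, h6, hNeg,
      Fin.prod_univ_eq_prod_range γ (2*s+3)]

  -- Step 3 : gamma product
  have hE : ∑ k ∈ range (2*s+1), (2*s+2-k) = 2*(s*s)+5*s+2 := by
    have h0 : ∀ k ∈ range (2*s+1), 2*s+2-k = (2*s+1-1-k)+2 := by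
      intro k hk
      simp only [mem_range] at hk
      omega
    rw [Finset.sum_congr rfl h0]
    rw [Finset.sum_range_reflect (fun j => j+2) (2*s+1)]
    rw [Finset.sum_add_distrib, Finset.sum_const, Finset.card_range, smul_eq_mul]
    have h2 := Finset.sum_range_id_mul_two (2*s+1)
    have h3 : (2*s+1)*(2*s+1-1) = (2*(s*s)+s)*2 := by
      rw [show 2*s+1-1 = 2*s by omega]; ring
    rw [h3] at h2
    have h4 := Nat.eq_of_mul_eq_mul_right (show 0 < 2 by norm_num) h2
    rw [h4]
    ring
  have hγprod : ∏ k ∈ range (2*s+3), γ k =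
      (d^(2*s+4) + ((2*s+4 : ℕ) : F) * d) * (((2*s+4 : ℕ) : F) * d^(2*s+3) + 1) *
        ((∏ k ∈ range (2*s+1), ((2*s+4).choose (2+k) : F)) * d^(2*(s*s)+5*s+2)) := by
    rw [show 2*s+3 = 2+(2*s+1) by omega, prod_peel2, hγ0, hγ1]
    have h0 : ∀ k ∈ range (2*s+1), γ (2+k)
        = ((2*s+4).choose (2+k) : F) * d^(2*s+2-k) := by
      intro k hk
      simp only [mem_range] at hk
      rw [hγ2, show 2*s+4-(2+k) = 2*s+2-k by omega]
    rw [Finset.prod_congr rfl h0, Finset.prod_mul_distrib,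
      Finset.prod_pow_eq_pow_sum, hE, show 2+(2*s+1) = 2*s+3 by omega]
  -- Step 4 : binomial product
  have hPC : (∏ k ∈ range (2*s+1), ((2*s+4).choose (2+k) : F)) =
      ((2*s+4).choose (s+2) : F) *
        ((∏ k ∈ range (s+2), ((2*s+4).choose k : F)) * ((2*s+4 : ℕ) : F)⁻¹)^2 := by
    have h1 := congrArg (fun m : ℕ => (m : F)) (choose_prod_aux s)
    push_cast at h1
    have hcne : ((2:F)*(s:F)+4) ≠ 0 := by
      intro h
      apply hc2ne
      push_cast
      linear_combination h
    field_simp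
    push_cast
    linear_combination h1

  -- Step 5 : case analysis chunk
  obtain ⟨Z, hZsq, hZ⟩ : ∃ Z : F, IsSquare Z ∧
      (d^(2*s+4) + ((2*s+4 : ℕ) : F) * d) * (((2*s+4 : ℕ) : F) * d^(2*s+3) + 1) *
        d^(2*(s*s)+5*s+2) = d^(s+2) * Z := by
    set c : F := ((2*s+4 : ℕ) : F) with hc
    rcases hdd with hε | hε
    · -- d is a square
      have hsq : IsSquare d := by
        rw [FiniteField.isSquare_iff hrc2 hd, hq, show q/2 = 2*s+3 by omega]
        exact hε
      obtain ⟨r, hr⟩ := hsq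
      refine ⟨(1+c)^2 * (r^(2*(s*s)+4*s+1))^2,
        ⟨(1+c)*r^(2*(s*s)+4*s+1), by ring⟩, ?_⟩
      have h5 : (r^(2*(s*s)+4*s+1))^2 = d^(2*(s*s)+4*s+1) := by
        rw [sq, ← mul_pow, ← hr]
      rw [hd4, hε, h5]
      have key : d^(2*(s*s)+5*s+2) * d = d^(s+2) * d^(2*(s*s)+4*s+1) := by
        rw [← pow_succ, ← pow_add]
        congr 1
        ring
      linear_combination ((1+c)^2) * key
    · -- d is a nonsquare, -d is a square
      have hsq : IsSquare (-d) := by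
        rw [FiniteField.isSquare_iff hrc2 (neg_ne_zero.mpr hd), hq,
          show q/2 = 2*s+3 by omega]
        rw [show (-d) = (-1)*d by ring, mul_pow, hε]
        have : (-1 : F)^(2*s+3) = -1 := Odd.neg_one_pow ⟨s+1, by ring⟩
        rw [this]
        ring
      obtain ⟨w, hw⟩ := hsq
      have hw2 : w^2 = -d := by rw [sq, ← hw]
      refine ⟨(1-c)^2 * w^2 * (d^(s*s+2*s))^2,
        ⟨(1-c)*w*d^(s*s+2*s), by ring⟩, ?_⟩
      rw [hd4, hε, hw2]
      have key : d^(s+2) * ((d^(s*s+2*s))^2) * d = d^(2*(s*s)+5*s+2) * d := by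
        rw [← pow_mul, ← pow_add, ← pow_succ, ← pow_succ]
        congr 1
        ring
      linear_combination (-(1-c)^2) * key

  -- squares
  have hSq : IsSquare (Z * (V*V) *
      ((∏ k ∈ range (s+2), ((2*s+4).choose k : F)) * ((2*s+4 : ℕ) : F)⁻¹)^2 *
      (∏ j, α j) * S) := by
    apply IsSquare.mul
    apply IsSquare.mul
    apply IsSquare.mul
    apply IsSquare.mul
    · exact hZsq
    · exact ⟨V, rfl⟩
    · exact ⟨_, sq _⟩
    · exact _root_.isSquare_prod _ _ (fun j _ => (hα j).2)
    · rw [hSdef]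
      apply _root_.isSquare_prod
      intro i _
      apply _root_.isSquare_prod
      intro j _
      obtain ⟨w, hw⟩ := ((hα i).2).mul ((hα j).2)
      exact ⟨w⁻¹, by rw [hw, mul_inv]⟩
  obtain ⟨y, hy⟩ := hSq
  refine ⟨y, ?_⟩
  have hM : (Matrix.of fun i j : Fin (2*s+3) => (α i + d * α j) ^ (2*s+4)).det
      = V * B.det := by
    rw [hfact, Matrix.det_mul, Matrix.det_vandermonde, hV]
  calc (Matrix.of fun i j : Fin (2*s+3) => (α i + d * α j) ^ (2*s+4)).det
      = ((d^(2*s+4) + ((2*s+4 : ℕ) : F) * d) * (((2*s+4 : ℕ) : F) * d^(2*s+3) + 1) *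
          d^(2*(s*s)+5*s+2)) *
        ((∏ k ∈ range (2*s+1), ((2*s+4).choose (2+k) : F)) * ((-1:F)^(s+1) *
          ((V*V) * ((∏ j, α j) * S)))) := by
        rw [hM, hdetB, hγprod]; ring
    _ = (d^(s+2) * Z) * ((((2*s+4).choose (s+2) : F) *
          ((∏ k ∈ range (s+2), ((2*s+4).choose k : F)) * ((2*s+4 : ℕ) : F)⁻¹)^2) *
          ((-1:F)^(s+1) * ((V*V) * ((∏ j, α j) * S)))) := by
        rw [hZ, hPC]
    _ = d^(s+2) * (-1:F)^(s+1) * ((2*s+4).choose (s+2) : F) * y^2 := by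
        rw [sq y, ← hy]; ring
end

section
/- Let p > 3 be a prime with p ≡ 1 (mod 4) and let d be an integer with p ∤ d. Then the Legendre symbol of D(d,p) satisfies (D(d,p)/p) = (d/p)^{(p-1)/4}. -/
open Finset Matrix

private def sigmaFun (n k : ℕ) : ℕ := if k = 0 then 1 else if k = 1 then 0 else n + 1 - k

private lemma sigmaFun_lt {n k : ℕ} (hn : 2 ≤ n) (hk : k < n) : sigmaFun n k < n := by
  unfold sigmaFun; split_ifs <;> first | omega | (exfalso; assumption)

private lemma sigmaFun_invol {n k : ℕ} (hn : 2 ≤ n) (hk : k < n) :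
    sigmaFun n (sigmaFun n k) = k := by
  unfold sigmaFun; split_ifs <;> first | omega | (exfalso; assumption)

private def sigmaPerm (n : ℕ) (hn : 2 ≤ n) : Equiv.Perm (Fin n) :=
  Function.Involutive.toPerm (fun k => ⟨sigmaFun n k.1, sigmaFun_lt hn k.2⟩)
    (fun k => Fin.ext (sigmaFun_invol hn k.2))

private lemma sigmaPerm_apply (n : ℕ) (hn : 2 ≤ n) (k : Fin n) :
    ((sigmaPerm n hn k : Fin n) : ℕ) = sigmaFun n k.1 := rfl

private lemma key_sum {F : Type*} [CommRing F] (n : ℕ) (hn : 2 ≤ n) (δ X Y : F)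
    (hX : X ^ n = 1) (hY : Y ^ n = 1) :
    ∑ k ∈ Finset.range n, X ^ k *
      ((if k = 0 then δ ^ (n + 1) + (n + 1 : ℕ) * δ
        else if k = 1 then (n + 1 : ℕ) * δ ^ n + 1
        else (Nat.choose (n + 1) k : F) * δ ^ (n + 1 - k)) * Y ^ sigmaFun n k)
      = (X + δ * Y) ^ (n + 1) := by
  rw [add_pow]
  rw [Finset.range_eq_Ico, ← Finset.sum_Ico_consecutive _ (show 0 ≤ 2 by omega) hn]
  rw [Finset.range_eq_Ico, ← Finset.sum_Ico_consecutive _ (show 0 ≤ 2 by omega) (show 2 ≤ n + 1 + 1 by omega),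
    ← Finset.sum_Ico_consecutive _ (show 2 ≤ n by omega) (show n ≤ n + 1 + 1 by omega)]
  have hmid : ∑ k ∈ Finset.Ico 2 n, X ^ k *
      ((if k = 0 then δ ^ (n + 1) + (n + 1 : ℕ) * δ
        else if k = 1 then (n + 1 : ℕ) * δ ^ n + 1
        else (Nat.choose (n + 1) k : F) * δ ^ (n + 1 - k)) * Y ^ sigmaFun n k)
      = ∑ k ∈ Finset.Ico 2 n, X ^ k * (δ * Y) ^ (n + 1 - k) * (Nat.choose (n + 1) k : F) := by
    refine Finset.sum_congr rfl fun k hk => ?_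
    rw [Finset.mem_Ico] at hk
    rw [if_neg (by omega), if_neg (by omega), show sigmaFun n k = n + 1 - k by
      unfold sigmaFun; rw [if_neg (by omega), if_neg (by omega)]]
    rw [mul_pow]; ring
  rw [hmid]
  have hbd : ∑ k ∈ Finset.Ico 0 2, X ^ k *
      ((if k = 0 then δ ^ (n + 1) + (n + 1 : ℕ) * δ
        else if k = 1 then (n + 1 : ℕ) * δ ^ n + 1
        else (Nat.choose (n + 1) k : F) * δ ^ (n + 1 - k)) * Y ^ sigmaFun n k)
      = (∑ k ∈ Finset.Ico 0 2, X ^ k * (δ * Y) ^ (n + 1 - k) * (Nat.choose (n + 1) k : F))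
        + ∑ k ∈ Finset.Ico n (n + 1 + 1), X ^ k * (δ * Y) ^ (n + 1 - k) * (Nat.choose (n + 1) k : F) := by
    rw [← Finset.range_eq_Ico, Finset.sum_Ico_eq_sum_range]
    rw [show n + 1 + 1 - n = 2 from by omega]
    simp only [Finset.sum_range_succ, Finset.sum_range_zero, Finset.sum_range_one]
    norm_num [sigmaFun]
    have e1 : (δ * Y) ^ (n + 1) = δ ^ (n + 1) * Y := by rw [mul_pow, pow_succ Y, hY, one_mul]
    have e2 : (δ * Y) ^ n = δ ^ n := by rw [mul_pow, hY, mul_one]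
    have e3 : X ^ (n + 1) = X := by rw [pow_succ, hX, one_mul]
    rw [e1, e2, e3, hX]; ring
  rw [hbd]; ring

private lemma choose_prod_nat (m : ℕ) :
    (∏ k ∈ Finset.range (m + 1), Nat.choose m k) *
      (∏ k ∈ Finset.range (m + 1), Nat.factorial k) ^ 2 = (Nat.factorial m) ^ (m + 1) := by
  have h1 : ∏ k ∈ Finset.range (m + 1), Nat.factorial (m - k) = ∏ k ∈ Finset.range (m + 1), Nat.factorial k := by
    rw [← Finset.prod_range_reflect]
    exact Finset.prod_congr rfl fun k hk => by rw [Finset.mem_range] at hk; congr 1; omega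
  have h2 : ∀ k ∈ Finset.range (m + 1), Nat.choose m k * (Nat.factorial k * Nat.factorial (m - k)) = Nat.factorial m := by
    intro k hk
    rw [Finset.mem_range] at hk
    rw [← mul_assoc]
    exact Nat.choose_mul_factorial_mul_factorial (by omega)
  calc (∏ k ∈ Finset.range (m + 1), Nat.choose m k) * (∏ k ∈ Finset.range (m + 1), Nat.factorial k) ^ 2
      = ∏ k ∈ Finset.range (m + 1), (Nat.choose m k * (Nat.factorial k * Nat.factorial (m - k))) := by
        rw [Finset.prod_mul_distrib, Finset.prod_mul_distrib, h1, sq]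
    _ = (Nat.factorial m) ^ (m + 1) := by
        rw [Finset.prod_congr rfl h2, Finset.prod_const, Finset.card_range]

/-- Let `p > 3` be a prime with `p ≡ 1 (mod 4)` and `d` an integer with `p ∤ d`. Then the
Legendre symbol of `D(d,p) = det [(i² + d·j²)·((i² + d·j²)/p)]_{1 ≤ i,j ≤ (p-1)/2}` satisfies
`(D(d,p)/p) = (d/p)^{(p-1)/4}`. -/
theorem stmt_10 (p : ℕ) [Fact p.Prime] (hp3 : 3 < p) (hp4 : p % 4 = 1)
    (d : ℤ) (hd : ¬ (p : ℤ) ∣ d) :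
    legendreSym p
        (Matrix.det (Matrix.of fun i j : Fin ((p - 1) / 2) =>
          (((i : ℤ) + 1) ^ 2 + d * ((j : ℤ) + 1) ^ 2) *
            legendreSym p (((i : ℤ) + 1) ^ 2 + d * ((j : ℤ) + 1) ^ 2))) =
      legendreSym p d ^ ((p - 1) / 4) := by
  have hp : p.Prime := Fact.out
  obtain ⟨t, hpt⟩ : ∃ t, p = 4 * t + 1 := ⟨p / 4, by omega⟩
  have ht1 : 1 ≤ t := by omega
  set n := (p - 1) / 2 with hndef
  have hn2t : n = 2 * t := by omega
  have hn2 : 2 ≤ n := by omega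
  have hnp : 2 * n = p - 1 := by omega
  have hpn : p / 2 = n := by omega
  have ht4 : (p - 1) / 4 = t := by omega
  set δ : ZMod p := ((d : ℤ) : ZMod p) with hδdef
  have hδ : δ ≠ 0 := by
    rw [hδdef, Ne, ZMod.intCast_zmod_eq_zero_iff_dvd]; exact hd
  -- the variables
  set x : Fin n → ZMod p := fun i => (((i : ℕ) : ZMod p) + 1) ^ 2 with hxdef
  have hcastne : ∀ a : ℕ, 0 < a → a < p → ((a : ℕ) : ZMod p) ≠ 0 := by
    intro a ha hap
    rw [Ne, ZMod.natCast_eq_zero_iff]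
    intro hdvd
    have := Nat.le_of_dvd ha hdvd
    omega
  have hne : ∀ i : Fin n, (((i : ℕ) : ZMod p) + 1) ≠ 0 := by
    intro i
    have h := hcastne ((i : ℕ) + 1) (by omega) (by have := i.isLt; omega)
    push_cast at h
    exact h
  have hxpow : ∀ i, x i ^ n = 1 := by
    intro i
    rw [hxdef, ← pow_mul, show 2 * n = p - 1 from hnp]
    exact ZMod.pow_card_sub_one_eq_one (hne i)
  have hxinj : Function.Injective x := by
    intro a b hab
    have h0 : ((((a : ℕ) : ZMod p) + 1) - (((b : ℕ) : ZMod p) + 1)) *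
        ((((a : ℕ) : ZMod p) + 1) + (((b : ℕ) : ZMod p) + 1)) = 0 := by
      rw [hxdef] at hab
      linear_combination hab
    rcases mul_eq_zero.mp h0 with h | h
    · have h' : (((a : ℕ) + 1 : ℕ) : ZMod p) = (((b : ℕ) + 1 : ℕ) : ZMod p) := by
        push_cast; linear_combination h
      have hva := ZMod.val_cast_of_lt (show (a : ℕ) + 1 < p by have := a.isLt; omega)
      have hvb := ZMod.val_cast_of_lt (show (b : ℕ) + 1 < p by have := b.isLt; omega)
      have : (a : ℕ) + 1 = (b : ℕ) + 1 := by rw [← hva, ← hvb, h']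
      exact Fin.ext (by omega)
    · exfalso
      have h' : ((((a : ℕ) + 1) + ((b : ℕ) + 1) : ℕ) : ZMod p) = 0 := by
        push_cast; linear_combination h
      rw [ZMod.natCast_eq_zero_iff] at h'
      have := Nat.le_of_dvd (by omega) h'
      have := a.isLt; have := b.isLt
      omega
  -- the permutation and coefficient function
  set σ : Equiv.Perm (Fin n) := sigmaPerm n hn2 with hσdef
  set cval : ℕ → ZMod p := fun k =>
    if k = 0 then δ ^ (n + 1) + ((n + 1 : ℕ) : ZMod p) * δ
    else if k = 1 then ((n + 1 : ℕ) : ZMod p) * δ ^ n + 1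
    else ((Nat.choose (n + 1) k : ℕ) : ZMod p) * δ ^ (n + 1 - k) with hcvaldef
  set Cmat : Matrix (Fin n) (Fin n) (ZMod p) := Matrix.of fun k j =>
    cval (k : ℕ) * (((Matrix.vandermonde x)ᵀ).submatrix (⇑σ) id k j) with hCmatdef
  -- the matrix factorization
  set M₀ : Matrix (Fin n) (Fin n) ℤ := Matrix.of fun i j : Fin n =>
          ((((i : ℤ) + 1) ^ 2 + d * (((j : ℤ)) + 1) ^ 2) *
            legendreSym p (((i : ℤ) + 1) ^ 2 + d * ((j : ℤ) + 1) ^ 2)) with hM₀def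
  have hfact : M₀.map (Int.cast : ℤ → ZMod p) = Matrix.vandermonde x * Cmat := by
    ext i j
    simp only [hM₀def, hCmatdef, Matrix.map_apply, Matrix.of_apply, Matrix.mul_apply]
    rw [Int.cast_mul, legendreSym.eq_pow, hpn]
    push_cast
    have hw : ((((i : ℕ)) : ZMod p) + 1) ^ 2 + ((d : ℤ) : ZMod p) * ((((j : ℕ)) : ZMod p) + 1) ^ 2
        = x i + δ * x j := rfl
    rw [hw, ← pow_succ']
    have := key_sum (F := ZMod p) n hn2 δ (x i) (x j) (hxpow i) (hxpow j)
    rw [← this, ← Fin.sum_univ_eq_sum_range (fun k => x i ^ k * (cval k * x j ^ sigmaFun n k)) n]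
    refine Finset.sum_congr rfl fun k _ => ?_
    simp only [Matrix.vandermonde, Matrix.submatrix_apply, Matrix.transpose_apply,
      Matrix.of_apply, id_eq]
    rw [hσdef, hcvaldef]
    rfl
  -- determinant of the coefficient matrix
  have hV : (Matrix.vandermonde x).det ≠ 0 := Matrix.det_vandermonde_ne_zero_iff.mpr hxinj
  have hCdet1 : Cmat.det = (∏ k : Fin n, cval (k : ℕ)) *
      ((((Matrix.vandermonde x)ᵀ).submatrix (⇑σ) id).det) := by
    rw [hCmatdef]
    exact Matrix.det_mul_column _ _
  have hCdet2 : (((Matrix.vandermonde x)ᵀ).submatrix (⇑σ) id).det =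
      ((Equiv.Perm.sign σ : ℤ) : ZMod p) * (Matrix.vandermonde x).det := by
    rw [Matrix.det_permute, Matrix.det_transpose]
  have hdet : ((M₀.det : ℤ) : ZMod p) = (Matrix.vandermonde x).det *
      ((∏ k : Fin n, cval (k : ℕ)) *
        (((Equiv.Perm.sign σ : ℤ) : ZMod p) * (Matrix.vandermonde x).det)) := by
    have h1 : ((M₀.det : ℤ) : ZMod p) = ((Int.castRingHom (ZMod p)) M₀.det) := rfl
    have h2 : M₀.map ⇑(Int.castRingHom (ZMod p)) = Matrix.vandermonde x * Cmat := hfact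
    rw [h1, RingHom.map_det, RingHom.mapMatrix_apply, h2, Matrix.det_mul, hCdet1, hCdet2]
  -- quadratic character facts
  have hQneg : quadraticChar (ZMod p) (-1) = 1 := by
    refine (quadraticChar_one_iff_isSquare (by
      intro h
      rw [neg_eq_zero] at h
      exact one_ne_zero h)).mpr ?_
    exact ZMod.exists_sq_eq_neg_one_iff.mpr (by omega)
  have hQpm : ∀ a : ZMod p, a = 1 ∨ a = -1 → quadraticChar (ZMod p) a = 1 := by
    rintro a (rfl | rfl)
    · exact map_one _
    · exact hQneg
  -- the scalar m̄ = (n+1 : F) is 1/2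
  have h2m : (2 : ZMod p) * ((n + 1 : ℕ) : ZMod p) = 1 := by
    have e1 : (2 : ZMod p) * ((n + 1 : ℕ) : ZMod p) = ((2 * (n + 1) : ℕ) : ZMod p) := by
      push_cast; ring
    rw [e1, show 2 * (n + 1) = p + 1 by omega]
    push_cast
    rw [ZMod.natCast_self]
    ring
  have h3 : (3 : ZMod p) ≠ 0 := by
    have h := hcastne 3 (by omega) (by omega)
    push_cast at h
    exact h
  have hs2 : δ ^ n * δ ^ n = 1 := by
    rw [← pow_add, show n + n = p - 1 by omega]
    exact ZMod.pow_card_sub_one_eq_one hδ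
  have hss : δ ^ n = 1 ∨ δ ^ n = -1 := mul_self_eq_one_iff.mp hs2
  have hsm : δ ^ n + ((n + 1 : ℕ) : ZMod p) ≠ 0 := by
    rcases hss with h | h <;> rw [h] <;> intro hcon
    · apply h3
      have : (2 : ZMod p) * (1 + ((n + 1 : ℕ) : ZMod p)) = 3 := by
        rw [mul_add, h2m]; ring
      rw [hcon, mul_zero] at this
      exact this.symm
    · apply one_ne_zero (α := ZMod p)
      have hm1 : ((n + 1 : ℕ) : ZMod p) = 1 := by linear_combination hcon
      rw [hm1, mul_one] at h2m
      linear_combination h2m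
  -- character of cval 0 * cval 1
  have hc01 : cval 0 * cval 1 = δ * δ ^ n * (δ ^ n + ((n + 1 : ℕ) : ZMod p)) ^ 2 := by
    rw [hcvaldef]
    norm_num
    push_cast
    linear_combination (-(δ * (((n : ℕ) : ZMod p) + 1) + δ * δ ^ n)) * hs2
  have hQ01 : quadraticChar (ZMod p) (cval 0 * cval 1) = quadraticChar (ZMod p) δ := by
    rw [hc01, _root_.map_mul, _root_.map_mul, quadraticChar_sq_one' hsm, hQpm _ hss, mul_one,
      mul_one]
  -- the binomial coefficient product is a square
  have hfz : ∀ a : ℕ, a < p → ((Nat.factorial a : ℕ) : ZMod p) ≠ 0 := by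
    intro a ha
    rw [Ne, ZMod.natCast_eq_zero_iff]
    intro hdvd
    have := (Nat.Prime.dvd_factorial hp).mp hdvd
    omega
  have hQfacne : ((Nat.factorial (n + 1) : ℕ) : ZMod p) ≠ 0 := hfz (n + 1) (by omega)
  have hQne : (∏ k ∈ Finset.range (n + 1 + 1), ((Nat.factorial k : ℕ) : ZMod p)) ≠ 0 := by
    rw [Finset.prod_ne_zero_iff]
    intro k hk
    rw [Finset.mem_range] at hk
    exact hfz k (by omega)
  have hcast : (∏ k ∈ Finset.range (n + 1 + 1), ((Nat.choose (n + 1) k : ℕ) : ZMod p)) *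
      (∏ k ∈ Finset.range (n + 1 + 1), ((Nat.factorial k : ℕ) : ZMod p)) ^ 2
      = ((Nat.factorial (n + 1) : ℕ) : ZMod p) ^ (n + 1 + 1) := by
    have h := congrArg (fun z : ℕ => (z : ZMod p)) (choose_prod_nat (n + 1))
    push_cast at h
    exact h
  have hPval : (∏ k ∈ Finset.range (n + 1 + 1), ((Nat.choose (n + 1) k : ℕ) : ZMod p)) =
      (((Nat.factorial (n + 1) : ℕ) : ZMod p) ^ (t + 1) /
        (∏ k ∈ Finset.range (n + 1 + 1), ((Nat.factorial k : ℕ) : ZMod p))) ^ 2 := by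
    rw [div_pow, eq_div_iff (pow_ne_zero 2 hQne), ← pow_mul,
      show (t + 1) * 2 = n + 1 + 1 by omega]
    exact hcast
  have hQP : quadraticChar (ZMod p)
      (∏ k ∈ Finset.range (n + 1 + 1), ((Nat.choose (n + 1) k : ℕ) : ZMod p)) = 1 := by
    rw [hPval]
    exact quadraticChar_sq_one' (div_ne_zero (pow_ne_zero _ hQfacne) hQne)
  have hmne : ((n + 1 : ℕ) : ZMod p) ≠ 0 := hcastne (n + 1) (by omega) (by omega)
  have hPsplit : (∏ k ∈ Finset.range (n + 1 + 1), ((Nat.choose (n + 1) k : ℕ) : ZMod p)) =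
      (((n + 1 : ℕ) : ZMod p) * ((n + 1 : ℕ) : ZMod p)) *
        ∏ k ∈ Finset.Ico 2 n, ((Nat.choose (n + 1) k : ℕ) : ZMod p) := by
    rw [Finset.range_eq_Ico,
      ← Finset.prod_Ico_consecutive _ (show 0 ≤ 2 by omega) (show 2 ≤ n + 1 + 1 by omega),
      ← Finset.prod_Ico_consecutive _ (show 2 ≤ n by omega) (show n ≤ n + 1 + 1 by omega)]
    have e1 : (∏ k ∈ Finset.Ico 0 2, ((Nat.choose (n + 1) k : ℕ) : ZMod p)) =
        ((n + 1 : ℕ) : ZMod p) := by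
      rw [← Finset.range_eq_Ico, Finset.prod_range_succ, Finset.prod_range_one,
        Nat.choose_zero_right, Nat.choose_one_right]
      push_cast; ring
    have e2 : (∏ k ∈ Finset.Ico n (n + 1 + 1), ((Nat.choose (n + 1) k : ℕ) : ZMod p)) =
        ((n + 1 : ℕ) : ZMod p) := by
      rw [Finset.prod_Ico_eq_prod_range, show n + 1 + 1 - n = 2 by omega,
        Finset.prod_range_succ, Finset.prod_range_one]
      norm_num [Nat.choose_succ_self_right]
    rw [e1, e2]
    ring
  have hbinom : (∏ k ∈ Finset.Ico 2 n,
      quadraticChar (ZMod p) ((Nat.choose (n + 1) k : ℕ) : ZMod p)) = 1 := by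
    rw [← map_prod]
    have h := hQP
    rw [hPsplit, _root_.map_mul, _root_.map_mul] at h
    have hQm2 : quadraticChar (ZMod p) ((n + 1 : ℕ) : ZMod p) *
        quadraticChar (ZMod p) ((n + 1 : ℕ) : ZMod p) = 1 := by
      have := quadraticChar_sq_one (F := ZMod p) hmne
      rwa [sq] at this
    rw [hQm2, one_mul] at h
    exact h
  -- split the product of cval
  have hprodsplit : (∏ k : Fin n, cval (k : ℕ)) =
      (cval 0 * cval 1) * ∏ k ∈ Finset.Ico 2 n, cval k := by
    rw [Fin.prod_univ_eq_prod_range (fun k => cval k) n, Finset.range_eq_Ico,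
      ← Finset.prod_Ico_consecutive _ (show 0 ≤ 2 by omega) hn2]
    congr 1
    rw [← Finset.range_eq_Ico, Finset.prod_range_succ, Finset.prod_range_one]
  set S : ℕ := ∑ k ∈ Finset.Ico 2 n, (n + 1 - k) with hSdef
  have hIco : quadraticChar (ZMod p) (∏ k ∈ Finset.Ico 2 n, cval k) =
      quadraticChar (ZMod p) δ ^ S := by
    rw [map_prod]
    have he : ∀ k ∈ Finset.Ico 2 n, quadraticChar (ZMod p) (cval k) =
        quadraticChar (ZMod p) ((Nat.choose (n + 1) k : ℕ) : ZMod p) *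
          quadraticChar (ZMod p) δ ^ (n + 1 - k) := by
      intro k hk
      rw [Finset.mem_Ico] at hk
      rw [hcvaldef]
      simp only
      rw [if_neg (by omega), if_neg (by omega), _root_.map_mul, map_pow]
    rw [Finset.prod_congr rfl he, Finset.prod_mul_distrib, hbinom, one_mul,
      Finset.prod_pow_eq_pow_sum]
  -- parity of S
  have hSpar : (S + 1) % 2 = t % 2 := by
    have h1 : S = ∑ i ∈ Finset.range (n - 2), (n + 1 - (2 + i)) :=
      Finset.sum_Ico_eq_sum_range _ 2 n
    have h2 : ∑ i ∈ Finset.range (n - 2), (n + 1 - (2 + i)) =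
        ∑ i ∈ Finset.range (n - 2), (n - 2 - 1 - i + 2) :=
      Finset.sum_congr rfl fun i hi => by rw [Finset.mem_range] at hi; omega
    have h3 : ∑ i ∈ Finset.range (n - 2), (n - 2 - 1 - i + 2)
        = ∑ i ∈ Finset.range (n - 2), (i + 2) :=
      Finset.sum_range_reflect (fun j => j + 2) (n - 2)
    have h4 : ∑ i ∈ Finset.range (n - 2), (i + 2)
        = (∑ i ∈ Finset.range (n - 2), i) + (n - 2) * 2 := by
      rw [Finset.sum_add_distrib, Finset.sum_const, Finset.card_range, smul_eq_mul]
    have hg := Finset.sum_range_id_mul_two (n - 2)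
    have hs0 : (∑ i ∈ Finset.range (n - 2), i) = (t - 1) * (n - 2 - 1) := by
      refine Nat.eq_of_mul_eq_mul_right (show 0 < 2 by norm_num) ?_
      rw [hg, show n - 2 = 2 * (t - 1) by omega]
      ring
    have hSval : S = (t - 1) * (n - 2 - 1) + (n - 2) * 2 := by
      rw [h1, h2, h3, h4, hs0]
    rcases Nat.even_or_odd (t - 1) with ⟨k, hk⟩ | ⟨k, hk⟩
    · obtain ⟨E, hE⟩ : ∃ E, S = 2 * E + (n - 2) * 2 :=
        ⟨k * (n - 2 - 1), by rw [hSval, hk]; ring⟩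
      omega
    · obtain ⟨E, hE⟩ : ∃ E, S = 2 * E + (n - 2 - 1) + (n - 2) * 2 :=
        ⟨k * (n - 2 - 1), by rw [hSval, hk]; ring⟩
      omega
  -- assemble the character of the product
  have hQprod : quadraticChar (ZMod p) (∏ k : Fin n, cval (k : ℕ)) =
      quadraticChar (ZMod p) δ ^ (S + 1) := by
    rw [hprodsplit, _root_.map_mul, hQ01, hIco, pow_succ]
    ring
  have hQsign : quadraticChar (ZMod p) (((Equiv.Perm.sign σ : ℤ) : ZMod p)) = 1 := by
    rcases Int.units_eq_one_or (Equiv.Perm.sign σ) with h | h <;> rw [h]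
    · norm_num
    · norm_num [hQneg]
  have hQV : quadraticChar (ZMod p) ((Matrix.vandermonde x).det) *
      quadraticChar (ZMod p) ((Matrix.vandermonde x).det) = 1 := by
    have h := quadraticChar_sq_one (F := ZMod p) hV
    rwa [sq] at h
  have hQeq : ∀ a : ℤ, legendreSym p a = quadraticChar (ZMod p) ((a : ℤ) : ZMod p) :=
    fun a => rfl
  rw [hQeq, hQeq d, ht4]
  rw [hdet, _root_.map_mul, _root_.map_mul, _root_.map_mul, hQprod, hQsign, one_mul]
  have hfin : quadraticChar (ZMod p) δ ^ (S + 1) = quadraticChar (ZMod p) δ ^ t := by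
    rcases quadraticChar_dichotomy hδ with h | h <;> rw [h]
    · simp
    · rcases Nat.even_or_odd t with he | ho
      · rw [(Nat.even_iff.mpr (by rw [hSpar]; exact Nat.even_iff.mp he)).neg_one_pow,
          he.neg_one_pow]
      · rw [(Nat.odd_iff.mpr (by rw [hSpar]; exact Nat.odd_iff.mp ho)).neg_one_pow,
          ho.neg_one_pow]
  rw [hfin]
  linear_combination (quadraticChar (ZMod p) δ ^ t) * hQV
end

section
/- Let q = 2n+1 be an odd prime power and let d ∈ F_q^×. The map σ_d : x ↦ d²·x is a permutation of the set F_q^{×2} of nonzero squares of F_q, and its sign satisfies sgn(σ_d) = φ(d)^{n-1}, where φ(d) = 1 if d is a square in F_q^× and φ(d) = -1 otherwise. -/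
section Aux

variable {F : Type} [Field F] [Fintype F] [DecidableEq F]
    [DecidablePred (IsSquare : F → Prop)]

/-- Multiplication by `c ^ 2` as a permutation of the nonzero squares. -/
def psiAux (c : Fˣ) : Equiv.Perm {x : F // x ≠ 0 ∧ IsSquare x} :=
  (Equiv.mulLeft₀ ((c : F) ^ 2) (pow_ne_zero 2 c.ne_zero)).subtypeEquiv fun x => by
    simp only [Equiv.mulLeft₀_apply]
    constructor
    · rintro ⟨hx0, hxs⟩
      exact ⟨mul_ne_zero (pow_ne_zero 2 c.ne_zero) hx0,
        IsSquare.mul ⟨(c : F), pow_two _⟩ hxs⟩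
    · rintro ⟨h0, hs⟩
      have hx0 : x ≠ 0 := by rintro rfl; simp at h0
      refine ⟨hx0, ?_⟩
      have hx : x = ((c : F)⁻¹) ^ 2 * ((c : F) ^ 2 * x) := by
        field_simp
      rw [hx]
      exact IsSquare.mul ⟨((c : F)⁻¹), pow_two _⟩ hs

lemma psiAux_apply (c : Fˣ) (x : {x : F // x ≠ 0 ∧ IsSquare x}) :
    ((psiAux c x : {x : F // x ≠ 0 ∧ IsSquare x}) : F) = (c : F) ^ 2 * x := rfl

lemma psiAux_mul (c c' : Fˣ) : psiAux (c * c') = psiAux c * psiAux c' := by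
  refine Equiv.ext fun x => Subtype.ext ?_
  rw [Equiv.Perm.mul_apply]
  simp only [psiAux_apply]
  push_cast
  ring

lemma psiAux_one : psiAux (1 : Fˣ) = 1 := by
  refine Equiv.ext fun x => Subtype.ext ?_
  simp [psiAux_apply]

lemma psiAux_pow (c : Fˣ) (m : ℕ) : psiAux (c ^ m) = psiAux c ^ m := by
  induction m with
  | zero => simpa using psiAux_one
  | succ k ih => rw [pow_succ, psiAux_mul, ih, pow_succ]

end Aux

/-- Let `q = 2n+1` be an odd prime power and `d ∈ F_q^×`. The map `σ_d : x ↦ d²·x` is a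
permutation of the set of nonzero squares of `F_q`, and its sign is `φ(d)^{n-1}`, where
`φ(d) = 1` if `d` is a square and `φ(d) = -1` otherwise. -/
theorem stmt_12 (F : Type) [Field F] [Fintype F] [DecidableEq F]
    [DecidablePred (IsSquare : F → Prop)]
    (n : ℕ) (hq : Fintype.card F = 2 * n + 1) (d : F) (hd : d ≠ 0) :
    ∃ σ : Equiv.Perm {x : F // x ≠ 0 ∧ IsSquare x},
      (∀ x, (↑(σ x) : F) = d ^ 2 * ↑x) ∧
        Equiv.Perm.sign σ = (if IsSquare d then (1 : ℤˣ) else -1) ^ (n - 1) := by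
  have h2 : ringChar F ≠ 2 := by
    intro h
    have := FiniteField.even_card_of_char_two h
    omega
  have hn1 : 1 ≤ n := by
    have := Fintype.one_lt_card (α := F)
    omega
  have hdiv : Fintype.card F / 2 = n := by omega
  have hsq : ∀ a : F, a ≠ 0 → (IsSquare a ↔ a ^ n = 1) := fun a ha => by
    rw [FiniteField.isSquare_iff h2 ha, hdiv]
  have hcu : Fintype.card Fˣ = 2 * n := by
    rw [Fintype.card_units, hq]; omega
  obtain ⟨g, hg⟩ := IsCyclic.exists_generator (α := Fˣ)
  have hog : orderOf g = 2 * n := by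
    rw [orderOf_eq_card_of_forall_mem_zpowers hg, Nat.card_eq_fintype_card, hcu]
  set du : Fˣ := Units.mk0 d hd with hdu
  obtain ⟨k, hk⟩ : du ∈ Submonoid.powers g := by
    rw [mem_powers_iff_mem_zpowers]; exact hg du
  -- the element 1 of the set of nonzero squares
  set S := {x : F // x ≠ 0 ∧ IsSquare x}
  have hone : (1 : F) ≠ 0 ∧ IsSquare (1 : F) := ⟨one_ne_zero, IsSquare.one⟩
  set x₀ : S := ⟨1, hone⟩ with hx₀
  refine ⟨psiAux du, fun x => by simp [psiAux_apply, hdu], ?_⟩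
  -- IsSquare d ↔ Even k
  have hsquk : IsSquare d ↔ Even k := by
    constructor
    · intro hs
      have hdn : du ^ n = 1 := by
        have := (hsq d hd).mp hs
        ext
        push_cast
        exact this
      rw [← hk, ← pow_mul] at hdn
      have h1 : 2 * n ∣ k * n := by rw [← hog]; exact orderOf_dvd_of_pow_eq_one hdn
      obtain ⟨m, hm⟩ := h1
      have : k = 2 * m := by
        have : k * n = 2 * m * n := by rw [hm]; ring
        exact Nat.eq_of_mul_eq_mul_right (by omega) this
      exact ⟨m, by omega⟩
    · rintro ⟨m, rfl⟩
      have : d = ((g ^ m : Fˣ) : F) * ((g ^ m : Fˣ) : F) := by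
        have : du = g ^ m * g ^ m := by rw [← hk, ← pow_add]
        have h' := congrArg Units.val this
        push_cast at h'
        exact h'
      exact ⟨_, this⟩
  -- sign of psiAux g
  rcases eq_or_lt_of_le hn1 with hn1' | hn2
  · -- n = 1 : subsingleton
    have hsub : ∀ x : S, (x : F) = 1 := fun x => by
      have := (hsq x.1 x.2.1).mp x.2.2
      rwa [← hn1', pow_one] at this
    haveI : Subsingleton S := ⟨fun a b => Subtype.ext (by rw [hsub a, hsub b])⟩
    have : psiAux du = 1 := Equiv.ext fun x => Subsingleton.elim _ _
    rw [this, ← hn1']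
    simp
  · -- n ≥ 2
    have hfix : ∀ y : S, psiAux g y ≠ y := by
      intro y hy
      have h1 : (g : F) ^ 2 * (y : F) = 1 * (y : F) := by
        rw [one_mul, ← psiAux_apply, hy]
      have h2' : (g : F) ^ 2 = 1 := mul_right_cancel₀ y.2.1 h1
      have hg2 : g ^ 2 = 1 := by ext; push_cast; exact h2'
      have hdd := orderOf_dvd_of_pow_eq_one hg2
      rw [hog] at hdd
      have := Nat.le_of_dvd (by norm_num) hdd
      omega
    have hpowval : ∀ (m : ℕ) (x : S), (((psiAux g ^ m) x : S) : F) = ((g : F) ^ m) ^ 2 * x := by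
      intro m x
      rw [← psiAux_pow, psiAux_apply]
      push_cast
      ring
    have hcyc : (psiAux g (F := F)).IsCycle := by
      refine ⟨x₀, hfix x₀, fun y _ => ?_⟩
      -- y is a nonzero square, i.e. an even power of g
      have hy0 : (y : F) ≠ 0 := y.2.1
      set yu : Fˣ := Units.mk0 (y : F) hy0 with hyu
      have hyusq : IsSquare yu := by
        rw [FiniteField.unit_isSquare_iff h2 yu, hdiv]
        ext
        push_cast
        exact (hsq (y : F) hy0).mp y.2.2
      obtain ⟨v, hv⟩ := hyusq
      obtain ⟨m, hm⟩ : v ∈ Submonoid.powers g := by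
        rw [mem_powers_iff_mem_zpowers]; exact hg v
      refine ⟨(m : ℤ), ?_⟩
      rw [zpow_natCast]
      refine Subtype.ext ?_
      rw [hpowval m x₀]
      have : (y : F) = (yu : F) := rfl
      rw [this, hv, ← hm]
      push_cast
      ring
    have horder : orderOf (psiAux g (F := F)) = n := by
      have h1 : psiAux g ^ n = (1 : Equiv.Perm S) := by
        refine Equiv.ext fun x => Subtype.ext ?_
        rw [hpowval n x]
        have : (g : F) ^ n * ((g : F) ^ n) = 1 := by
          have : g ^ (2 * n) = 1 := by rw [← hog]; exact pow_orderOf_eq_one g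
          have := congrArg (Units.val) this
          push_cast at this
          rw [← this]; ring
        rw [Equiv.Perm.coe_one, id_eq, pow_two, this, one_mul]
      have hdvd : orderOf (psiAux g (F := F)) ∣ n := orderOf_dvd_of_pow_eq_one h1
      have hdvd2 : n ∣ orderOf (psiAux g (F := F)) := by
        set m := orderOf (psiAux g (F := F)) with hmdef
        have hm1 : psiAux g ^ m = 1 := pow_orderOf_eq_one _
        have : (((psiAux g ^ m) x₀ : S) : F) = 1 := by rw [hm1]; rfl
        rw [hpowval m x₀] at this
        have hg2m : g ^ (2 * m) = 1 := by
          ext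
          push_cast
          calc (g : F) ^ (2 * m) = ((g : F) ^ m) ^ 2 * 1 := by rw [mul_one, ← pow_mul, mul_comm]
          _ = 1 := this
        have := orderOf_dvd_of_pow_eq_one hg2m
        rw [hog] at this
        obtain ⟨t, ht⟩ := this
        rw [mul_assoc] at ht
        exact ⟨t, Nat.eq_of_mul_eq_mul_left two_pos ht⟩
      exact Nat.dvd_antisymm hdvd hdvd2
    have hsupp : (psiAux g (F := F)).support.card = n := by
      rw [← hcyc.orderOf, horder]
    have hsigng : Equiv.Perm.sign (psiAux g (F := F)) = (-1 : ℤˣ) ^ (n - 1) := by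
      rw [hcyc.sign, hsupp]
      obtain ⟨m, rfl⟩ : ∃ m, n = m + 1 := ⟨n - 1, by omega⟩
      simp [pow_succ]
    -- put things together
    rw [← hk, psiAux_pow, map_pow, hsigng, ← pow_mul, mul_comm (n-1) k, pow_mul]
    congr 1
    rcases Nat.even_or_odd k with hke | hko
    · rw [if_pos (hsquk.mpr hke), hke.neg_one_pow]
    · rw [if_neg (fun hs => (Nat.not_even_iff_odd.mpr hko) (hsquk.mp hs)), hko.neg_one_pow]
end

section
/- Let q = 2n+1 be an odd prime power. The map inv_q : x ↦ x^{-1} is a permutation of the set F_q^{×2} of nonzero squares of F_q, and its sign equals: (-1)^{(n-1)/2} if q ≡ 3 (mod 4); 1 if q ≡ 5 (mod 8); and -1 if q ≡ 1 (mod 8). -/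
lemma my_sign_involution {α : Type*} [DecidableEq α] [Fintype α] (σ : Equiv.Perm α)
    (h : σ * σ = 1) : (Equiv.Perm.sign σ : ℤ) = (-1) ^ (σ.support.card / 2) := by
  by_cases hσ : σ = 1
  · simp [hσ]
  · have ho : orderOf σ = 2 := orderOf_eq_prime (by rwa [sq]) hσ
    obtain ⟨k, hk⟩ := Equiv.Perm.cycleType_prime_order (ho ▸ Nat.prime_two)
    rw [ho] at hk
    have hsupp : σ.support.card = 2 * (k + 1) := by
      rw [← Equiv.Perm.sum_cycleType, hk, Multiset.sum_replicate, smul_eq_mul, Nat.mul_comm]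
    have hs := Equiv.Perm.sign_of_cycleType σ
    rw [hk] at hs
    simp only [Multiset.sum_replicate, Multiset.card_replicate, smul_eq_mul] at hs
    have : (Equiv.Perm.sign σ : ℤ) = ((-1 : ℤˣ) ^ ((k + 1) * 2 + (k + 1)) : ℤˣ) := by
      exact_mod_cast congrArg (Units.val) hs
    rw [this, hsupp]
    push_cast
    have h2 : 2 * (k + 1) / 2 = k + 1 := by omega
    rw [h2, pow_add, mul_comm (k + 1) 2, pow_mul, neg_one_sq, one_pow, one_mul]

lemma my_card_squares (F : Type) [Field F] [Fintype F] [DecidableEq F]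
    [DecidablePred (IsSquare : F → Prop)]
    (n : ℕ) (hq : Fintype.card F = 2 * n + 1) :
    Fintype.card {x : F // x ≠ 0 ∧ IsSquare x} = n := by
  have hchar : ringChar F ≠ 2 := by
    intro h
    have := FiniteField.even_card_iff_char_two.mp h
    omega
  have hne : (-1 : F) ≠ 1 := Ring.neg_one_ne_one_of_char_ne_two hchar
  classical
  rw [Fintype.card_subtype]
  set T : Finset F := Finset.univ.filter (fun x => x ≠ 0 ∧ IsSquare x) with hT
  set U : Finset F := Finset.univ.filter (fun x : F => x ≠ 0) with hU
  have hUcard : U.card = 2 * n := by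
    rw [hU, Finset.filter_ne', Finset.card_erase_of_mem (Finset.mem_univ 0),
      Finset.card_univ, hq]
    omega
  have hmaps : ∀ x ∈ U, x * x ∈ T := by
    intro x hx
    rw [hU, Finset.mem_filter] at hx
    rw [hT, Finset.mem_filter]
    exact ⟨Finset.mem_univ _, mul_ne_zero hx.2 hx.2, ⟨x, rfl⟩⟩
  have hfib := Finset.card_eq_sum_card_fiberwise hmaps
  have hfib2 : ∀ b ∈ T, (Finset.filter (fun x => x * x = b) U).card = 2 := by
    intro b hb
    rw [hT, Finset.mem_filter] at hb
    obtain ⟨-, hb0, a, ha⟩ := hb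
    have ha0 : a ≠ 0 := by rintro rfl; exact hb0 (by simpa using ha)
    have hane : a ≠ -a := by
      intro h
      have : (1 : F) * a = -1 * a := by rw [one_mul, neg_one_mul]; exact h
      exact hne ((mul_right_cancel₀ ha0 this).symm)
    have : Finset.filter (fun x => x * x = b) U = {a, -a} := by
      ext x
      rw [Finset.mem_filter, hU, Finset.mem_filter]
      simp only [Finset.mem_univ, true_and, Finset.mem_insert, Finset.mem_singleton]
      constructor
      · rintro ⟨-, hx⟩
        rw [ha] at hx
        exact mul_self_eq_mul_self_iff.mp hx
      · rintro (rfl | rfl)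
        · exact ⟨ha0, ha.symm⟩
        · exact ⟨neg_ne_zero.mpr ha0, by rw [neg_mul_neg, ← ha]⟩
    rw [this, Finset.card_insert_of_notMem (by simpa using hane), Finset.card_singleton]
  rw [Finset.sum_congr rfl hfib2, Finset.sum_const, smul_eq_mul, hUcard] at hfib
  omega

/-- Let `q = 2n+1` be an odd prime power. The map `inv_q : x ↦ x⁻¹` is a permutation of the set
of nonzero squares of `F_q`, and its sign equals `(-1)^{(n-1)/2}` if `q ≡ 3 (mod 4)`, `1` if
`q ≡ 5 (mod 8)`, and `-1` if `q ≡ 1 (mod 8)`. -/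
theorem stmt_14 (F : Type) [Field F] [Fintype F] [DecidableEq F]
    [DecidablePred (IsSquare : F → Prop)]
    (n : ℕ) (hq : Fintype.card F = 2 * n + 1) :
    ∃ σ : Equiv.Perm {x : F // x ≠ 0 ∧ IsSquare x},
      (∀ x, (↑(σ x) : F) = (↑x : F)⁻¹) ∧
        (Equiv.Perm.sign σ : ℤ) =
          if (2 * n + 1) % 4 = 3 then (-1 : ℤ) ^ ((n - 1) / 2)
          else if (2 * n + 1) % 8 = 5 then 1
          else -1 := by
  classical
  have hchar : ringChar F ≠ 2 := by
    intro h
    have := FiniteField.even_card_iff_char_two.mp h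
    omega
  have hne : (-1 : F) ≠ 1 := Ring.neg_one_ne_one_of_char_ne_two hchar
  set α := {x : F // x ≠ 0 ∧ IsSquare x} with hα
  have hσaux : ∀ x : α, ((x : F)⁻¹ ≠ 0 ∧ IsSquare (x : F)⁻¹) :=
    fun x => ⟨inv_ne_zero x.2.1, x.2.2.inv⟩
  refine ⟨⟨fun x => ⟨(x : F)⁻¹, hσaux x⟩, fun x => ⟨(x : F)⁻¹, hσaux x⟩,
    fun x => by simp, fun x => by simp⟩, fun x => rfl, ?_⟩
  set σ : Equiv.Perm α := ⟨fun x => ⟨(x : F)⁻¹, hσaux x⟩, fun x => ⟨(x : F)⁻¹, hσaux x⟩,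
    fun x => by simp, fun x => by simp⟩ with hσdef
  have hinv : σ * σ = 1 := by
    ext x
    simp [hσdef]
  -- fixed points
  have hfix_iff : ∀ x : α, σ x = x ↔ ((x : F) = 1 ∨ (x : F) = -1) := by
    intro x
    rw [Subtype.ext_iff]
    show (x : F)⁻¹ = x ↔ _
    rw [← mul_self_eq_one_iff]
    constructor
    · intro h
      nth_rewrite 1 [← h]
      exact inv_mul_cancel₀ x.2.1
    · intro h
      exact (eq_inv_of_mul_eq_one_left h).symm
  have hcardα : Fintype.card α = n := my_card_squares F n hq
  have hsplit : (Finset.univ.filter (fun x : α => σ x = x)).card + σ.support.card = n := by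
    have := Finset.card_filter_add_card_filter_not
      (s := (Finset.univ : Finset α)) (p := fun x : α => σ x = x)
    rw [Finset.card_univ, hcardα] at this
    rw [← this]
    congr 1
  have hn0 : 1 ≤ n := by
    have h2 : 2 ≤ Fintype.card F := Fintype.one_lt_card
    omega
  have one_mem : (1 : F) ≠ 0 ∧ IsSquare (1 : F) := ⟨one_ne_zero, IsSquare.one⟩
  have hsign := my_sign_involution σ hinv
  by_cases h4 : (2 * n + 1) % 4 = 3
  · -- -1 is not a square
    have hns : ¬ IsSquare (-1 : F) := by
      rw [FiniteField.isSquare_neg_one_iff, hq]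
      simpa using h4
    have hfilter : (Finset.univ.filter (fun x : α => σ x = x)) = {⟨1, one_mem⟩} := by
      ext x
      simp only [Finset.mem_filter, Finset.mem_univ, true_and, Finset.mem_singleton,
        hfix_iff x]
      constructor
      · rintro (h | h)
        · exact Subtype.ext h
        · exact absurd (h ▸ x.2.2) hns
      · rintro rfl; exact Or.inl rfl
    rw [hfilter, Finset.card_singleton] at hsplit
    have hodd : n % 2 = 1 := by omega
    rw [if_pos h4, hsign]
    congr 1
    omega
  · -- -1 is a square
    have hs : IsSquare (-1 : F) := by
      rw [FiniteField.isSquare_neg_one_iff, hq]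
      simpa using h4
    have neg_mem : (-1 : F) ≠ 0 ∧ IsSquare (-1 : F) := ⟨neg_ne_zero.mpr one_ne_zero, hs⟩
    have hfilter : (Finset.univ.filter (fun x : α => σ x = x))
        = {⟨1, one_mem⟩, ⟨-1, neg_mem⟩} := by
      ext x
      simp only [Finset.mem_filter, Finset.mem_univ, true_and, Finset.mem_insert,
        Finset.mem_singleton, hfix_iff x]
      constructor
      · rintro (h | h)
        · exact Or.inl (Subtype.ext h)
        · exact Or.inr (Subtype.ext h)
      · rintro (rfl | rfl)
        · exact Or.inl rfl
        · exact Or.inr rfl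
    have hcard2 : (Finset.univ.filter (fun x : α => σ x = x)).card = 2 := by
      rw [hfilter, Finset.card_insert_of_notMem, Finset.card_singleton]
      simp only [Finset.mem_singleton]
      intro h
      exact hne (Subtype.ext_iff.mp h).symm
    rw [hcard2] at hsplit
    have hneven : n % 2 = 0 := by omega
    have hn2 : 2 ≤ n := by omega
    rw [if_neg h4, hsign]
    by_cases h8 : (2 * n + 1) % 8 = 5
    · rw [if_pos h8]
      have : Even (σ.support.card / 2) := by
        rw [Nat.even_iff]; omega
      exact this.neg_one_pow
    · rw [if_neg h8]
      have : Odd (σ.support.card / 2) := by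
        rw [Nat.odd_iff]; omega
      exact this.neg_one_pow
end

section
/- Let R be a commutative ring, let m be a positive integer, let p_0, p_1, …, p_{m-1} ∈ R, and set P(T) = p_{m-1}T^{m-1} + ⋯ + p_1 T + p_0 ∈ R[T]. Then for any X_1, …, X_m, Y_1, …, Y_m ∈ R, det[P(X_i·Y_j)]_{1≤i,j≤m} = (∏_{i=0}^{m-1} p_i) · ∏_{1≤i<j≤m} (X_i - X_j)(Y_i - Y_j). -/
/-- Let `R` be a commutative ring, `m` a positive integer,
`P(T) = p_{m-1}T^{m-1} + ⋯ + p_1 T + p_0 ∈ R[T]`, and `X_1, …, X_m, Y_1, …, Y_m ∈ R`. Then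
`det [P(X_i·Y_j)]_{1 ≤ i,j ≤ m} = (∏_{i=0}^{m-1} p_i) · ∏_{i<j} (X_i - X_j)(Y_i - Y_j)`. -/
theorem stmt_15 (R : Type) [CommRing R] (m : ℕ) (hm : 0 < m)
    (p : Fin m → R) (X Y : Fin m → R) :
    Matrix.det (Matrix.of fun i j : Fin m => ∑ k : Fin m, p k * (X i * Y j) ^ (k : ℕ)) =
      (∏ k : Fin m, p k) *
        ∏ i : Fin m, ∏ j ∈ Finset.Ioi i, (X i - X j) * (Y i - Y j) := by
  have hfac : (Matrix.of fun i j : Fin m => ∑ k : Fin m, p k * (X i * Y j) ^ (k : ℕ)) =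
      Matrix.vandermonde X * Matrix.diagonal p * (Matrix.vandermonde Y).transpose := by
    ext i j
    simp [Matrix.mul_apply, Matrix.vandermonde, Matrix.diagonal, mul_ite, mul_zero,
      Finset.sum_ite_eq]
    apply Finset.sum_congr rfl
    intros k _
    ring
  rw [hfac, Matrix.det_mul, Matrix.det_mul, Matrix.det_transpose, Matrix.det_vandermonde,
    Matrix.det_vandermonde, Matrix.det_diagonal,
    show (∏ i : Fin m, ∏ j ∈ Finset.Ioi i, (X i - X j) * (Y i - Y j)) =
      (∏ i : Fin m, ∏ j ∈ Finset.Ioi i, (X j - X i)) *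
      ∏ i : Fin m, ∏ j ∈ Finset.Ioi i, (Y j - Y i) from by
      rw [← Finset.prod_mul_distrib]
      refine Finset.prod_congr rfl fun i _ => ?_
      rw [← Finset.prod_mul_distrib]
      exact Finset.prod_congr rfl fun j _ => by ring]
  ring
end
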